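/- arXiv:1103.0868 — 5 statements merged into one kernel-verified Lean document; each statement's English description precedes it below -/
import Mathlib

section
/- Let χ be a weighted game on n voters with exactly two types of voters and exactly one type of shift-minimal winning coalition (r = 1). Then χ admits a minimum integer representation. -/
def SimpleGame (n : ℕ) (χ : Finset (Fin n) → Prop) : Prop :=
  (∀ U V : Finset (Fin n), U ⊆ V → χ U → χ V) ∧ ¬ χ (∅ : Finset (Fin n)) ∧ χ Finset.univ

def IsRep {n : ℕ} (χ : Finset (Fin n) → Prop) (q : ℕ) (w : Fin n → ℕ) : Prop :=
  ∀ U : Finset (Fin n), χ U ↔ q ≤ ∑ i ∈ U, w i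

def IsWeighted {n : ℕ} (χ : Finset (Fin n) → Prop) : Prop :=
  ∃ q w, IsRep χ q w

def MinRep {n : ℕ} (χ : Finset (Fin n) → Prop) (q : ℕ) (w : Fin n → ℕ) : Prop :=
  IsRep χ q w ∧ ∀ q' w', IsRep χ q' w' → ∀ i, w i ≤ w' i

def Desir {n : ℕ} (χ : Finset (Fin n) → Prop) (i j : Fin n) : Prop :=
  ∀ U : Finset (Fin n), j ∈ U → i ∉ U → χ U → χ (insert i (U.erase j))

def VEquiv {n : ℕ} (χ : Finset (Fin n) → Prop) (i j : Fin n) : Prop :=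
  Desir χ i j ∧ Desir χ j i

def StrictDesir {n : ℕ} (χ : Finset (Fin n) → Prop) (i j : Fin n) : Prop :=
  Desir χ i j ∧ ¬ Desir χ j i

def NullVoter {n : ℕ} (χ : Finset (Fin n) → Prop) (i : Fin n) : Prop :=
  ∀ U : Finset (Fin n), χ (insert i U) ↔ χ U

def ShiftMinWin {n : ℕ} (χ : Finset (Fin n) → Prop) (U : Finset (Fin n)) : Prop :=
  χ U ∧ (∀ i ∈ U, ¬ χ (U.erase i)) ∧
    ∀ i ∈ U, ∀ j, j ∉ U → StrictDesir χ i j → ¬ χ (insert j (U.erase i))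

def ShiftMaxLose {n : ℕ} (χ : Finset (Fin n) → Prop) (U : Finset (Fin n)) : Prop :=
  ¬ χ U ∧ (∀ j, j ∉ U → χ (insert j U)) ∧
    ∀ j ∈ U, ∀ i, i ∉ U → StrictDesir χ i j → χ (insert i (U.erase j))

def TwoTypes {n : ℕ} (χ : Finset (Fin n) → Prop) (N1 N2 : Finset (Fin n)) : Prop :=
  N1.Nonempty ∧ N2.Nonempty ∧ Disjoint N1 N2 ∧ N1 ∪ N2 = Finset.univ ∧
  (∀ i ∈ N1, ∀ j ∈ N1, VEquiv χ i j) ∧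
  (∀ i ∈ N2, ∀ j ∈ N2, VEquiv χ i j) ∧
  (∀ i ∈ N1, ∀ j ∈ N2, StrictDesir χ i j)

noncomputable def NumWinTypes2 {n : ℕ} (χ : Finset (Fin n) → Prop) (N1 N2 : Finset (Fin n)) : ℕ :=
  Set.ncard {p : ℕ × ℕ | ∃ U, ShiftMinWin χ U ∧ p = ((U ∩ N1).card, (U ∩ N2).card)}

def LPFeasible {n : ℕ} (χ : Finset (Fin n) → Prop) (N1 N2 : Finset (Fin n))
    (w1 w2 q : ℝ) : Prop :=
  0 ≤ w1 ∧ 0 ≤ w2 ∧ 0 ≤ q ∧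
  (∀ U, ShiftMinWin χ U → q ≤ ((U ∩ N1).card : ℝ) * w1 + ((U ∩ N2).card : ℝ) * w2) ∧
  (∀ U, ShiftMaxLose χ U → ((U ∩ N1).card : ℝ) * w1 + ((U ∩ N2).card : ℝ) * w2 ≤ q - 1)

def GameIso (n : ℕ) (χ χ' : Finset (Fin n) → Prop) : Prop :=
  ∃ σ : Equiv.Perm (Fin n), ∀ U : Finset (Fin n), χ' U ↔ χ (U.image σ)

noncomputable def NumTypes (n : ℕ) (χ : Finset (Fin n) → Prop) : ℕ :=
  Set.ncard {S : Set (Fin n) | ∃ i, S = {j | VEquiv χ i j}}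

noncomputable def ClassCount (n : ℕ) (χ : Finset (Fin n) → Prop) (U : Finset (Fin n)) (i : Fin n) : ℕ :=
  Set.ncard {j : Fin n | j ∈ U ∧ VEquiv χ i j}

def SameType (n : ℕ) (χ : Finset (Fin n) → Prop) (U V : Finset (Fin n)) : Prop :=
  ∀ i, ClassCount n χ U i = ClassCount n χ V i

noncomputable def NumSMWTypes (n : ℕ) (χ : Finset (Fin n) → Prop) : ℕ :=
  Set.ncard {T : Set (Finset (Fin n)) | ∃ U, ShiftMinWin χ U ∧
    T = {V | ShiftMinWin χ V ∧ SameType n χ U V}}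

noncomputable def wmntr (n t r : ℕ) : ℕ :=
  Set.ncard {C : Set (Finset (Fin n) → Prop) | ∃ χ, SimpleGame n χ ∧ IsWeighted χ ∧
    NumTypes n χ = t ∧ NumSMWTypes n χ = r ∧ C = {χ' | GameIso n χ χ'}}

noncomputable def wmnt (n t : ℕ) : ℕ :=
  Set.ncard {C : Set (Finset (Fin n) → Prop) | ∃ χ, SimpleGame n χ ∧ IsWeighted χ ∧
    NumTypes n χ = t ∧ C = {χ' | GameIso n χ χ'}}

def PreservesTypes {n : ℕ} (χ : Finset (Fin n) → Prop) (w : Fin n → ℕ) : Prop :=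
  ∀ i j, VEquiv χ i j → w i = w j

def MinRepPT {n : ℕ} (χ : Finset (Fin n) → Prop) (q : ℕ) (w : Fin n → ℕ) : Prop :=
  IsRep χ q w ∧ PreservesTypes χ w ∧
    ∀ q' w', IsRep χ q' w' → PreservesTypes χ w' → ∀ i, w i ≤ w' i

def Repre (a b k : ℕ) : Prop := ∃ u v : ℕ, u * a + v * b = k

def Wvec (t a b : ℕ) (l : Fin t → ℕ) (k : Fin t) : Fin (t + b + a) → ℕ :=
  fun i => if h : (i : ℕ) < t then
      (a * b - l ⟨(i : ℕ), h⟩ - 1) + (if (i : ℕ) = (k : ℕ) then 0 else 1)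
    else if (i : ℕ) < t + b then a else b

section Aux

variable {n : ℕ} {χ : Finset (Fin n) → Prop}

lemma swap_iff {i j : Fin n} {U : Finset (Fin n)} (h : VEquiv χ i j)
    (hj : j ∈ U) (hi : i ∉ U) : χ U ↔ χ (insert i (U.erase j)) := by
  have hij : i ≠ j := by rintro rfl; exact hi hj
  constructor
  · intro hU; exact h.1 U hj hi hU
  · intro hU
    have hji : j ∉ insert i (U.erase j) := by simp [Ne.symm hij]
    have hii : i ∈ insert i (U.erase j) := Finset.mem_insert_self _ _
    have h3 := h.2 _ hii hji hU
    rwa [Finset.erase_insert (by simp [hi]), Finset.insert_erase hj] at h3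

lemma card_swap {i j : Fin n} {U T : Finset (Fin n)} (hiU : i ∈ U) (hjU : j ∉ U)
    (hT : i ∈ T ↔ j ∈ T) : ((insert j (U.erase i)) ∩ T).card = (U ∩ T).card := by
  have hij : i ≠ j := by rintro rfl; exact hjU hiU
  by_cases hiT : i ∈ T
  · have hjT := hT.mp hiT
    have hset : (insert j (U.erase i)) ∩ T = insert j ((U ∩ T).erase i) := by
      ext x
      simp only [Finset.mem_inter, Finset.mem_insert, Finset.mem_erase]
      constructor
      · rintro ⟨rfl | ⟨hxi, hxU⟩, hxT⟩
        · exact Or.inl rfl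
        · exact Or.inr ⟨hxi, hxU, hxT⟩
      · rintro (rfl | ⟨hxi, hxU, hxT⟩)
        · exact ⟨Or.inl rfl, hjT⟩
        · exact ⟨Or.inr ⟨hxi, hxU⟩, hxT⟩
    rw [hset, Finset.card_insert_of_notMem (by simp [hjU]),
      Finset.card_erase_of_mem (Finset.mem_inter.mpr ⟨hiU, hiT⟩)]
    have : 0 < (U ∩ T).card := Finset.card_pos.mpr ⟨i, Finset.mem_inter.mpr ⟨hiU, hiT⟩⟩
    omega
  · have hjT : j ∉ T := fun h => hiT (hT.mpr h)
    have hset : (insert j (U.erase i)) ∩ T = U ∩ T := by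
      ext x
      simp only [Finset.mem_inter, Finset.mem_insert, Finset.mem_erase]
      constructor
      · rintro ⟨rfl | ⟨hxi, hxU⟩, hxT⟩
        · exact absurd hxT hjT
        · exact ⟨hxU, hxT⟩
      · rintro ⟨hxU, hxT⟩
        exact ⟨Or.inr ⟨fun h => hiT (h ▸ hxT), hxU⟩, hxT⟩
    rw [hset]

lemma exch_step {C D : Finset (Fin n)} (hd : Disjoint C D)
    (hE : ∀ i ∈ C, ∀ j ∈ C, VEquiv χ i j)
    {U V : Finset (Fin n)} {i : Fin n} (hiU : i ∈ U) (hiV : i ∉ V) (hiC : i ∈ C)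
    (h1 : (U ∩ C).card = (V ∩ C).card) :
    ∃ j, j ∉ U ∧ j ∈ V ∧ (χ U ↔ χ (insert j (U.erase i))) ∧
      ((insert j (U.erase i)) ∩ C).card = (U ∩ C).card ∧
      ((insert j (U.erase i)) ∩ D).card = (U ∩ D).card := by
  -- find j ∈ (V ∩ C) \ U
  have hcard : ((U ∩ C) \ V).card = ((V ∩ C) \ U).card := by
    have e1 : ((U ∩ C) \ V).card + ((U ∩ C) ∩ V).card = (U ∩ C).card :=
      Finset.card_sdiff_add_card_inter _ _
    have e2 : ((V ∩ C) \ U).card + ((V ∩ C) ∩ U).card = (V ∩ C).card :=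
      Finset.card_sdiff_add_card_inter _ _
    have e3 : (U ∩ C) ∩ V = (V ∩ C) ∩ U := by
      ext x; simp only [Finset.mem_inter]; tauto
    rw [e3] at e1
    omega
  have hpos : 0 < ((V ∩ C) \ U).card := by
    rw [← hcard]
    exact Finset.card_pos.mpr ⟨i, by simp [Finset.mem_sdiff, hiU, hiC, hiV]⟩
  obtain ⟨j, hj⟩ := Finset.card_pos.mp hpos
  simp only [Finset.mem_sdiff, Finset.mem_inter] at hj
  obtain ⟨⟨hjV, hjC⟩, hjU⟩ := hj
  refine ⟨j, hjU, hjV, ?_, ?_, ?_⟩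
  · exact swap_iff (hE j hjC i hiC) hiU hjU
  · exact card_swap hiU hjU (by simp [hiC, hjC])
  · exact card_swap hiU hjU (by
      constructor
      · intro h; exact absurd h (Finset.disjoint_left.mp hd hiC)
      · intro h; exact absurd h (Finset.disjoint_left.mp hd hjC))

lemma invar {N1 N2 : Finset (Fin n)} (hN : N1 ∪ N2 = Finset.univ)
    (hd : Disjoint N1 N2)
    (hE1 : ∀ i ∈ N1, ∀ j ∈ N1, VEquiv χ i j)
    (hE2 : ∀ i ∈ N2, ∀ j ∈ N2, VEquiv χ i j) :
    ∀ m (U V : Finset (Fin n)), (U \ V).card = m →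
      (U ∩ N1).card = (V ∩ N1).card → (U ∩ N2).card = (V ∩ N2).card →
      (χ U ↔ χ V) := by
  intro m
  induction m with
  | zero =>
    intro U V hm h1 h2
    have hUV : U ⊆ V := by
      rw [← Finset.sdiff_eq_empty_iff_subset]
      exact Finset.card_eq_zero.mp hm
    have hcardU : (U ∩ N1).card + (U ∩ N2).card = U.card := by
      rw [← Finset.card_union_of_disjoint (hd.mono (Finset.inter_subset_right)
        (Finset.inter_subset_right)), ← Finset.inter_union_distrib_left, hN,
        Finset.inter_univ]
    have hcardV : (V ∩ N1).card + (V ∩ N2).card = V.card := by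
      rw [← Finset.card_union_of_disjoint (hd.mono (Finset.inter_subset_right)
        (Finset.inter_subset_right)), ← Finset.inter_union_distrib_left, hN,
        Finset.inter_univ]
    have : U = V := Finset.eq_of_subset_of_card_le hUV (by omega)
    rw [this]
  | succ m ih =>
    intro U V hm h1 h2
    have hne : (U \ V).Nonempty := Finset.card_pos.mp (by omega)
    obtain ⟨i, hi⟩ := hne
    rw [Finset.mem_sdiff] at hi
    obtain ⟨hiU, hiV⟩ := hi
    have hiC : i ∈ N1 ∨ i ∈ N2 := by
      have : i ∈ N1 ∪ N2 := hN ▸ Finset.mem_univ i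
      exact Finset.mem_union.mp this
    have main : ∀ j, j ∉ U → j ∈ V →
        (χ U ↔ χ (insert j (U.erase i))) →
        ((insert j (U.erase i)) ∩ N1).card = (U ∩ N1).card →
        ((insert j (U.erase i)) ∩ N2).card = (U ∩ N2).card → (χ U ↔ χ V) := by
      intro j hjU hjV hswap c1 c2
      have hsd : (insert j (U.erase i)) \ V = (U \ V).erase i := by
        ext x
        simp only [Finset.mem_sdiff, Finset.mem_insert, Finset.mem_erase]
        constructor
        · rintro ⟨rfl | ⟨hxi, hxU⟩, hxV⟩
          · exact absurd hjV hxV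
          · exact ⟨hxi, hxU, hxV⟩
        · rintro ⟨hxi, hxU, hxV⟩
          exact ⟨Or.inr ⟨hxi, hxU⟩, hxV⟩
      have hsdc : ((insert j (U.erase i)) \ V).card = m := by
        rw [hsd, Finset.card_erase_of_mem (by simp [Finset.mem_sdiff, hiU, hiV]), hm]
        omega
      rw [hswap]
      exact ih _ V hsdc (c1.trans h1) (c2.trans h2)
    rcases hiC with hiC | hiC
    · obtain ⟨j, hjU, hjV, hsw, hc1, hc2⟩ := exch_step hd hE1 hiU hiV hiC h1
      exact main j hjU hjV hsw hc1 hc2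
    · obtain ⟨j, hjU, hjV, hsw, hc2, hc1⟩ := exch_step hd.symm hE2 hiU hiV hiC h2
      exact main j hjU hjV hsw hc1 hc2

end Aux
section Aux2

variable {n : ℕ} {χ : Finset (Fin n) → Prop}

lemma inter_swap_out {i j : Fin n} {U T : Finset (Fin n)} (hjT : j ∉ T) :
    (insert j (U.erase i)) ∩ T = (U ∩ T).erase i := by
  ext x
  simp only [Finset.mem_inter, Finset.mem_insert, Finset.mem_erase]
  constructor
  · rintro ⟨rfl | ⟨hxi, hxU⟩, hxT⟩
    · exact absurd hxT hjT
    · exact ⟨hxi, hxU, hxT⟩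
  · rintro ⟨hxi, hxU, hxT⟩
    exact ⟨Or.inr ⟨hxi, hxU⟩, hxT⟩

lemma inter_swap_in {i j : Fin n} {U T : Finset (Fin n)} (hiT : i ∉ T) (hjT : j ∈ T) :
    (insert j (U.erase i)) ∩ T = insert j (U ∩ T) := by
  ext x
  simp only [Finset.mem_inter, Finset.mem_insert, Finset.mem_erase]
  constructor
  · rintro ⟨rfl | ⟨hxi, hxU⟩, hxT⟩
    · exact Or.inl rfl
    · exact Or.inr ⟨hxU, hxT⟩
  · rintro (rfl | ⟨hxU, hxT⟩)
    · exact ⟨Or.inl rfl, hjT⟩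
    · exact ⟨Or.inr ⟨fun h => hiT (h ▸ hxT), hxU⟩, hxT⟩

lemma inter_erase {i : Fin n} {U T : Finset (Fin n)} :
    (U.erase i) ∩ T = (U ∩ T).erase i := by
  ext x
  simp only [Finset.mem_inter, Finset.mem_erase]
  tauto

lemma cardsplit {N1 N2 U : Finset (Fin n)} (hN : N1 ∪ N2 = Finset.univ)
    (hd : Disjoint N1 N2) :
    (U ∩ N1).card + (U ∩ N2).card = U.card := by
  rw [← Finset.card_union_of_disjoint (hd.mono (Finset.inter_subset_right)
    (Finset.inter_subset_right)), ← Finset.inter_union_distrib_left, hN,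
    Finset.inter_univ]

-- classification of StrictDesir pairs: must be (N1, N2)
lemma strict_pair {N1 N2 : Finset (Fin n)} (h2 : TwoTypes χ N1 N2)
    {i j : Fin n} (hs : StrictDesir χ i j) : i ∈ N1 ∧ j ∈ N2 := by
  obtain ⟨-, -, -, hN, hE1, hE2, hS⟩ := h2
  have hi : i ∈ N1 ∨ i ∈ N2 := Finset.mem_union.mp (hN ▸ Finset.mem_univ i)
  have hj : j ∈ N1 ∨ j ∈ N2 := Finset.mem_union.mp (hN ▸ Finset.mem_univ j)
  rcases hi with hi | hi <;> rcases hj with hj | hj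
  · exact absurd (hE1 j hj i hi).1 hs.2
  · exact ⟨hi, hj⟩
  · exact absurd (hS j hj i hi).1 hs.2
  · exact absurd (hE2 j hj i hi).1 hs.2

lemma win_ge {N1 N2 : Finset (Fin n)} (h2 : TwoTypes χ N1 N2)
    (hempty : ¬ χ (∅ : Finset (Fin n))) {a b : ℕ}
    (huniq : ∀ U, ShiftMinWin χ U → (U ∩ N1).card = a ∧ (U ∩ N2).card = b) :
    ∀ U, χ U → a ≤ (U ∩ N1).card ∧ a + b ≤ (U ∩ N1).card + (U ∩ N2).card := by
  have hd := h2.2.2.1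
  have hN := h2.2.2.2.1
  suffices h : ∀ m U, (n + 1) * U.card + (U ∩ N1).card ≤ m → χ U →
      a ≤ (U ∩ N1).card ∧ a + b ≤ (U ∩ N1).card + (U ∩ N2).card by
    intro U hw
    exact h ((n + 1) * U.card + (U ∩ N1).card) U le_rfl hw
  intro m
  induction m with
  | zero =>
    intro U hμ hw
    have h1 : (n + 1) * U.card = 0 := by omega
    have h2 : U.card = 0 := by
      rcases Nat.mul_eq_zero.mp h1 with h | h
      · omega
      · exact h
    rw [Finset.card_eq_zero.mp h2] at hw
    exact absurd hw hempty
  | succ m ih =>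
    intro U hμ hw
    by_cases hsmw : ShiftMinWin χ U
    · obtain ⟨e1, e2⟩ := huniq U hsmw
      omega
    · by_cases herase : ∀ i ∈ U, ¬ χ (U.erase i)
      · have hshift : ¬ ∀ i ∈ U, ∀ j, j ∉ U → StrictDesir χ i j →
            ¬ χ (insert j (U.erase i)) := fun h3 => hsmw ⟨hw, herase, h3⟩
        push_neg at hshift
        obtain ⟨i, hiU, j, hjU, hsd, hw'⟩ := hshift
        obtain ⟨hiN1, hjN2⟩ := strict_pair h2 hsd
        set U' := insert j (U.erase i) with hU'
        have hiN2 : i ∉ N2 := Finset.disjoint_left.mp hd hiN1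
        have hjN1 : j ∉ N1 := Finset.disjoint_right.mp hd hjN2
        have hc1 : (U' ∩ N1).card = (U ∩ N1).card - 1 := by
          rw [hU', inter_swap_out hjN1,
            Finset.card_erase_of_mem (Finset.mem_inter.mpr ⟨hiU, hiN1⟩)]
        have hc2 : (U' ∩ N2).card = (U ∩ N2).card + 1 := by
          rw [hU', inter_swap_in hiN2 hjN2, Finset.card_insert_of_notMem
            (fun h => hjU (Finset.mem_inter.mp h).1)]
        have hcc : U'.card = U.card := by
          rw [hU', Finset.card_insert_of_notMem (fun h => hjU (Finset.mem_erase.mp h).2),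
            Finset.card_erase_of_mem hiU]
          have : 0 < U.card := Finset.card_pos.mpr ⟨i, hiU⟩
          omega
        have hx1 : 1 ≤ (U ∩ N1).card :=
          Finset.card_pos.mpr ⟨i, Finset.mem_inter.mpr ⟨hiU, hiN1⟩⟩
        have hμ' : (n + 1) * U'.card + (U' ∩ N1).card ≤ m := by
          rw [hcc, hc1]; omega
        have := ih U' hμ' hw'
        omega
      · push_neg at herase
        obtain ⟨i, hiU, hw'⟩ := herase
        set U' := U.erase i with hU'
        have hcc : U'.card = U.card - 1 := Finset.card_erase_of_mem hiU
        have hcpos : 1 ≤ U.card := Finset.card_pos.mpr ⟨i, hiU⟩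
        have hcn : U.card ≤ n := by
          have := Finset.card_le_univ U
          simpa using this
        have hsum : (U ∩ N1).card + (U ∩ N2).card = U.card := cardsplit hN hd
        have hsum' : (U' ∩ N1).card + (U' ∩ N2).card = U'.card := cardsplit hN hd
        have hx' : (U' ∩ N1).card ≤ (U ∩ N1).card :=
          Finset.card_le_card (Finset.inter_subset_inter (Finset.erase_subset _ _) le_rfl)
        have hx'c : (U' ∩ N1).card ≤ U'.card :=
          Finset.card_le_card (Finset.inter_subset_left)
        obtain ⟨c, hc⟩ : ∃ c, U.card = c + 1 := ⟨U.card - 1, by omega⟩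
        have hprod : (n + 1) * (U.card - 1) + (n + 1) = (n + 1) * U.card := by
          rw [hc]; simp [Nat.mul_succ]
        have hμ' : (n + 1) * U'.card + (U' ∩ N1).card ≤ m := by
          rw [hcc]
          omega
        have := ih U' hμ' hw'
        omega

lemma win_of_counts {N1 N2 : Finset (Fin n)} (h2 : TwoTypes χ N1 N2)
    (hmono : ∀ U V : Finset (Fin n), U ⊆ V → χ U → χ V)
    {a b : ℕ} {U0 : Finset (Fin n)} (hU0w : χ U0)
    (hc1 : (U0 ∩ N1).card = a) (hc2 : (U0 ∩ N2).card = b) :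
    ∀ U, a ≤ (U ∩ N1).card → a + b ≤ (U ∩ N1).card + (U ∩ N2).card → χ U := by
  obtain ⟨hne1, hne2, hd, hN, hE1, hE2, hS⟩ := h2
  have hb2 : b ≤ N2.card := hc2 ▸ Finset.card_le_card (Finset.inter_subset_right)
  have winlevel : ∀ k, k ≤ b → ∀ V : Finset (Fin n),
      (V ∩ N1).card = a + k → (V ∩ N2).card = b - k → χ V := by
    intro k
    induction k with
    | zero =>
      intro _ V hv1 hv2
      have := invar hN hd hE1 hE2 (V \ U0).card V U0 rfl (by omega) (by omega)
      exact this.mpr hU0w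
    | succ k ih =>
      intro hkb V hv1 hv2
      have hiV : (V ∩ N1).Nonempty := Finset.card_pos.mp (by omega)
      obtain ⟨i, hi⟩ := hiV
      rw [Finset.mem_inter] at hi
      obtain ⟨hiV, hiN1⟩ := hi
      have hjex : (N2 \ V).Nonempty := by
        rw [← Finset.card_pos]
        have e := Finset.card_sdiff_add_card_inter N2 V
        have e2 : (N2 ∩ V).card = b - (k + 1) := by
          rw [Finset.inter_comm]; exact hv2
        omega
      obtain ⟨j, hj⟩ := hjex
      rw [Finset.mem_sdiff] at hj
      obtain ⟨hjN2, hjV⟩ := hj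
      have hiN2 : i ∉ N2 := Finset.disjoint_left.mp hd hiN1
      have hjN1 : j ∉ N1 := Finset.disjoint_right.mp hd hjN2
      have hij : i ≠ j := by rintro rfl; exact hiN2 hjN2
      set V' := insert j (V.erase i) with hV'
      have hv'1 : (V' ∩ N1).card = a + k := by
        rw [hV', inter_swap_out hjN1,
          Finset.card_erase_of_mem (Finset.mem_inter.mpr ⟨hiV, hiN1⟩), hv1]
        omega
      have hv'2 : (V' ∩ N2).card = b - k := by
        rw [hV', inter_swap_in hiN2 hjN2, Finset.card_insert_of_notMem
          (fun h => hjV (Finset.mem_inter.mp h).1), hv2]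
        omega
      have hwV' : χ V' := ih (by omega) V' hv'1 hv'2
      have hdes : Desir χ i j := (hS i hiN1 j hjN2).1
      have hjV' : j ∈ V' := Finset.mem_insert_self _ _
      have hiV' : i ∉ V' := by
        rw [hV']
        simp [hij, Finset.mem_erase]
      have := hdes V' hjV' hiV' hwV'
      have heq : insert i (V'.erase j) = V := by
        rw [hV', Finset.erase_insert (by simp [hjV]), Finset.insert_erase hiV]
      rwa [heq] at this
  intro U hx hxy
  set x := (U ∩ N1).card
  set y := (U ∩ N2).card
  have hkb : b - min y b ≤ b := by omega
  have htx : a + (b - min y b) ≤ x := by omega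
  obtain ⟨A, hA, hAc⟩ := Finset.exists_subset_card_eq htx
  obtain ⟨B, hB, hBc⟩ := Finset.exists_subset_card_eq (min_le_left y b)
  have hAN1 : A ⊆ N1 := hA.trans (Finset.inter_subset_right)
  have hBN2 : B ⊆ N2 := hB.trans (Finset.inter_subset_right)
  have hV1 : ((A ∪ B) ∩ N1).card = a + (b - min y b) := by
    have : (A ∪ B) ∩ N1 = A := by
      ext z
      simp only [Finset.mem_inter, Finset.mem_union]
      constructor
      · rintro ⟨hz | hz, hzN⟩
        · exact hz
        · exact absurd hzN (Finset.disjoint_right.mp hd (hBN2 hz))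
      · intro hz; exact ⟨Or.inl hz, hAN1 hz⟩
    rw [this, hAc]
  have hV2 : ((A ∪ B) ∩ N2).card = b - (b - min y b) := by
    have : (A ∪ B) ∩ N2 = B := by
      ext z
      simp only [Finset.mem_inter, Finset.mem_union]
      constructor
      · rintro ⟨hz | hz, hzN⟩
        · exact absurd hzN (Finset.disjoint_left.mp hd (hAN1 hz))
        · exact hz
      · intro hz; exact ⟨Or.inr hz, hBN2 hz⟩
    rw [this, hBc]
    omega
  have hwin : χ (A ∪ B) := winlevel _ hkb _ hV1 hV2
  exact hmono _ _ (Finset.union_subset (hA.trans (Finset.inter_subset_left))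
    (hB.trans (Finset.inter_subset_left))) hwin

end Aux2
section Aux3

variable {n : ℕ} {χ : Finset (Fin n) → Prop} {N1 N2 : Finset (Fin n)} {a b : ℕ}
  {q' : ℕ} {w' : Fin n → ℕ}

lemma inter_union_fst {A B : Finset (Fin n)} (hd : Disjoint N1 N2)
    (hA : A ⊆ N1) (hB : B ⊆ N2) : (A ∪ B) ∩ N1 = A := by
  ext z
  simp only [Finset.mem_inter, Finset.mem_union]
  constructor
  · rintro ⟨hz | hz, hzN⟩
    · exact hz
    · exact absurd hzN (Finset.disjoint_right.mp hd (hB hz))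
  · intro hz; exact ⟨Or.inl hz, hA hz⟩

lemma inter_union_snd {A B : Finset (Fin n)} (hd : Disjoint N1 N2)
    (hA : A ⊆ N1) (hB : B ⊆ N2) : (A ∪ B) ∩ N2 = B := by
  ext z
  simp only [Finset.mem_inter, Finset.mem_union]
  constructor
  · rintro ⟨hz | hz, hzN⟩
    · exact absurd hzN (Finset.disjoint_left.mp hd (hA hz))
    · exact hz
  · intro hz; exact ⟨Or.inr hz, hB hz⟩

lemma sum_union_split {A B : Finset (Fin n)} (hd : Disjoint N1 N2)
    (hA : A ⊆ N1) (hB : B ⊆ N2) :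
    ∑ i ∈ A ∪ B, w' i = ∑ i ∈ A, w' i + ∑ i ∈ B, w' i :=
  Finset.sum_union (hd.mono hA hB)

/-- The gap inequality between a losing and a winning coalition. -/
lemma gap_ineq (hrep : IsRep χ q' w') {U V : Finset (Fin n)}
    (hU : χ U) (hV : ¬ χ V) : ∑ i ∈ V, w' i + 1 ≤ ∑ i ∈ U, w' i := by
  have h1 := (hrep U).mp hU
  have h2 : ¬ q' ≤ ∑ i ∈ V, w' i := fun h => hV ((hrep V).mpr h)
  omega

/-- Key inequality (*): the weight of an N1 voter exceeds the total weight of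
the complement of any b-subset of N2. -/
lemma Lstar (hd : Disjoint N1 N2)
    (hchar : ∀ U : Finset (Fin n), χ U ↔
      (a ≤ (U ∩ N1).card ∧ a + b ≤ (U ∩ N1).card + (U ∩ N2).card))
    (ha1 : 1 ≤ a) (han : a ≤ N1.card)
    (hrep : IsRep χ q' w') {i : Fin n} (hi : i ∈ N1)
    {B : Finset (Fin n)} (hB : B ⊆ N2) (hBc : B.card = b) :
    ∑ x ∈ N2 \ B, w' x + 1 ≤ w' i := by
  have hcard : a - 1 ≤ (N1.erase i).card := by
    rw [Finset.card_erase_of_mem hi]; omega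
  obtain ⟨A, hA, hAc⟩ := Finset.exists_subset_card_eq hcard
  have hAN1 : A ⊆ N1 := hA.trans (Finset.erase_subset _ _)
  have hiA : i ∉ A := fun h => (Finset.mem_erase.mp (hA h)).1 rfl
  have hA'N1 : insert i A ⊆ N1 := Finset.insert_subset hi hAN1
  have hA'c : (insert i A).card = a := by
    rw [Finset.card_insert_of_notMem hiA, hAc]; omega
  -- winning coalition
  have hUwin : χ ((insert i A) ∪ B) := by
    rw [hchar, inter_union_fst hd hA'N1 hB, inter_union_snd hd hA'N1 hB, hA'c, hBc]
    omega
  -- losing coalition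
  have hVlose : ¬ χ (A ∪ N2) := by
    rw [hchar, inter_union_fst hd hAN1 le_rfl, hAc]
    omega
  have hgap := gap_ineq hrep hUwin hVlose
  rw [sum_union_split hd hA'N1 hB, sum_union_split hd hAN1 le_rfl,
    Finset.sum_insert hiA] at hgap
  have hsplit : ∑ x ∈ N2 \ B, w' x + ∑ x ∈ B, w' x = ∑ x ∈ N2, w' x :=
    Finset.sum_sdiff hB
  omega

/-- Construction giving `∑_C + 1 ≤ w' k + ∑_E` for suitable sets. -/
lemma LT2core (hd : Disjoint N1 N2)
    (hchar : ∀ U : Finset (Fin n), χ U ↔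
      (a ≤ (U ∩ N1).card ∧ a + b ≤ (U ∩ N1).card + (U ∩ N2).card))
    (ha1 : 1 ≤ a) (han : a ≤ N1.card) (hbn : b + 1 ≤ N2.card) (hb1 : 1 ≤ b)
    (hrep : IsRep χ q' w') {k : Fin n} (hk : k ∈ N2) :
    ∀ e, e ≤ N1.card - a → e ≤ b - 1 →
    ∃ C E : Finset (Fin n), C ⊆ N1 ∧ E ⊆ N2.erase k ∧ C.card = e ∧ E.card = e ∧
      ∑ x ∈ C, w' x + 1 ≤ w' k + ∑ x ∈ E, w' x := by
  intro e hed heb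
  obtain ⟨A, hAN1, hAc⟩ := Finset.exists_subset_card_eq han
  have hC : e ≤ (N1 \ A).card := by
    rw [Finset.card_sdiff_of_subset hAN1]; omega
  obtain ⟨C, hCsub, hCc⟩ := Finset.exists_subset_card_eq hC
  have hCN1 : C ⊆ N1 := hCsub.trans (Finset.sdiff_subset)
  have hB0 : b - 1 ≤ (N2.erase k).card := by
    rw [Finset.card_erase_of_mem hk]; omega
  obtain ⟨B0, hB0sub, hB0c⟩ := Finset.exists_subset_card_eq hB0
  obtain ⟨E, hEsub, hEc⟩ := Finset.exists_subset_card_eq (heb.trans_eq hB0c.symm)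
  have hB0N2 : B0 ⊆ N2 := hB0sub.trans (Finset.erase_subset _ _)
  have hkB0 : k ∉ B0 := fun h => (Finset.mem_erase.mp (hB0sub h)).1 rfl
  have hBN2 : insert k B0 ⊆ N2 := Finset.insert_subset hk hB0N2
  have hBc : (insert k B0).card = b := by
    rw [Finset.card_insert_of_notMem hkB0, hB0c]; omega
  -- winning coalition A ∪ (insert k B0), type (a, b)
  have hUwin : χ (A ∪ insert k B0) := by
    rw [hchar, inter_union_fst hd hAN1 hBN2, inter_union_snd hd hAN1 hBN2, hAc, hBc]
    omega
  -- losing coalition (A ∪ C) ∪ (B0 \ E), type (a + e, b - 1 - e)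
  have hACdisj : Disjoint A C := Finset.disjoint_left.mpr
    (fun x hxA hxC => (Finset.mem_sdiff.mp (hCsub hxC)).2 hxA)
  have hACN1 : A ∪ C ⊆ N1 := Finset.union_subset hAN1 hCN1
  have hACc : (A ∪ C).card = a + e := by
    rw [Finset.card_union_of_disjoint hACdisj, hAc, hCc]
  have hDN2 : B0 \ E ⊆ N2 := (Finset.sdiff_subset).trans hB0N2
  have hDc : (B0 \ E).card = b - 1 - e := by
    rw [Finset.card_sdiff_of_subset hEsub, hB0c, hEc]
  have hVlose : ¬ χ ((A ∪ C) ∪ (B0 \ E)) := by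
    rw [hchar, inter_union_fst hd hACN1 hDN2, inter_union_snd hd hACN1 hDN2, hACc, hDc]
    omega
  have hgap := gap_ineq hrep hUwin hVlose
  rw [sum_union_split hd hAN1 hBN2, sum_union_split hd hACN1 hDN2,
    Finset.sum_union hACdisj, Finset.sum_insert hkB0] at hgap
  have hsplit : ∑ x ∈ B0 \ E, w' x + ∑ x ∈ E, w' x = ∑ x ∈ B0, w' x :=
    Finset.sum_sdiff hEsub
  exact ⟨C, E, hCN1, hEsub.trans hB0sub, hCc, hEc, by omega⟩

/-- Lower bound for weights of N2 voters. -/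
lemma LT2 (hd : Disjoint N1 N2)
    (hchar : ∀ U : Finset (Fin n), χ U ↔
      (a ≤ (U ∩ N1).card ∧ a + b ≤ (U ∩ N1).card + (U ∩ N2).card))
    (ha1 : 1 ≤ a) (han : a ≤ N1.card) (hbn : b + 1 ≤ N2.card) (hb1 : 1 ≤ b)
    (hrep : IsRep χ q' w') {k : Fin n} (hk : k ∈ N2) :
    min (N1.card - a) (b - 1) + 1 ≤ w' k := by
  set e := min (N1.card - a) (b - 1) with he
  obtain ⟨C, E, hCN1, hEsub, hCc, hEc, hineq⟩ :=
    LT2core hd hchar ha1 han hbn hb1 hrep hk e (min_le_left _ _) (min_le_right _ _)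
  rcases Nat.eq_zero_or_pos e with h0 | hpos
  · rw [Finset.card_eq_zero.mp (hCc.trans h0), Finset.card_eq_zero.mp (hEc.trans h0)] at hineq
    simp at hineq
    omega
  · have hEne : E.Nonempty := Finset.card_pos.mp (by rw [hEc]; exact hpos)
    obtain ⟨M, hME, hMmax⟩ := Finset.exists_max_image E w' hEne
    have hMN2 : M ∈ N2 := (Finset.erase_subset _ _) (hEsub hME)
    -- each c ∈ C has weight ≥ w' M + 1
    have hCbound : ∀ c ∈ C, w' M + 1 ≤ w' c := by
      intro c hc
      have hBex : b ≤ (N2.erase M).card := by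
        rw [Finset.card_erase_of_mem hMN2]; omega
      obtain ⟨B', hB'sub, hB'c⟩ := Finset.exists_subset_card_eq hBex
      have hB'N2 : B' ⊆ N2 := hB'sub.trans (Finset.erase_subset _ _)
      have hMmem : M ∈ N2 \ B' := Finset.mem_sdiff.mpr
        ⟨hMN2, fun h => (Finset.mem_erase.mp (hB'sub h)).1 rfl⟩
      have h1 := Lstar hd hchar ha1 han hrep (hCN1 hc) hB'N2 hB'c
      have h2 : w' M ≤ ∑ x ∈ N2 \ B', w' x :=
        Finset.single_le_sum (fun x _ => Nat.zero_le _) hMmem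
      omega
    have hCsum : C.card * (w' M + 1) ≤ ∑ x ∈ C, w' x := by
      calc C.card * (w' M + 1) = C.card • (w' M + 1) := by rw [smul_eq_mul]
      _ ≤ ∑ x ∈ C, w' x := Finset.card_nsmul_le_sum C w' _ hCbound
    have hEsum : ∑ x ∈ E, w' x ≤ E.card * w' M := by
      calc ∑ x ∈ E, w' x ≤ E.card • w' M := Finset.sum_le_card_nsmul E w' _ hMmax
      _ = E.card * w' M := by rw [smul_eq_mul]
    rw [hCc] at hCsum
    rw [hEc] at hEsum
    have hmul : e * (w' M + 1) = e * w' M + e := by ring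
    omega

/-- Infeasibility: it cannot be that e ≥ 1 and N2.card - b ≥ 2. -/
lemma infeas (hd : Disjoint N1 N2)
    (hchar : ∀ U : Finset (Fin n), χ U ↔
      (a ≤ (U ∩ N1).card ∧ a + b ≤ (U ∩ N1).card + (U ∩ N2).card))
    (ha1 : 1 ≤ a) (han : a ≤ N1.card) (hbn : b + 2 ≤ N2.card) (hb1 : 1 ≤ b)
    (hne2 : N2.Nonempty)
    (hrep : IsRep χ q' w')
    (hpos : 1 ≤ min (N1.card - a) (b - 1)) : False := by
  obtain ⟨k, hk⟩ := hne2
  set e := min (N1.card - a) (b - 1) with he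
  obtain ⟨C, E, hCN1, hEsub, hCc, hEc, hineq⟩ :=
    LT2core hd hchar ha1 han (by omega) hb1 hrep hk e (min_le_left _ _) (min_le_right _ _)
  have hEne : E.Nonempty := Finset.card_pos.mp (by rw [hEc]; exact hpos)
  obtain ⟨M, hME, hMmax⟩ := Finset.exists_max_image E w' hEne
  have hMek : M ∈ N2.erase k := hEsub hME
  have hMN2 : M ∈ N2 := (Finset.erase_subset _ _) hMek
  have hMk : M ≠ k := (Finset.mem_erase.mp hMek).1
  -- each c ∈ C has weight ≥ w' k + w' M + 1
  have hCbound : ∀ c ∈ C, w' k + w' M + 1 ≤ w' c := by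
    intro c hc
    have hBex : b ≤ ((N2.erase k).erase M).card := by
      rw [Finset.card_erase_of_mem hMek, Finset.card_erase_of_mem hk]; omega
    obtain ⟨B', hB'sub, hB'c⟩ := Finset.exists_subset_card_eq hBex
    have hB'N2 : B' ⊆ N2 := hB'sub.trans ((Finset.erase_subset _ _).trans
      (Finset.erase_subset _ _))
    have hkB' : k ∉ B' := fun h =>
      (Finset.mem_erase.mp ((Finset.erase_subset _ _) (hB'sub h))).1 rfl
    have hMB' : M ∉ B' := fun h => (Finset.mem_erase.mp (hB'sub h)).1 rfl
    have hpair : {k, M} ⊆ N2 \ B' := by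
      intro x hx
      rcases Finset.mem_insert.mp hx with rfl | hx
      · exact Finset.mem_sdiff.mpr ⟨hk, hkB'⟩
      · rw [Finset.mem_singleton.mp hx]
        exact Finset.mem_sdiff.mpr ⟨hMN2, hMB'⟩
    have h1 := Lstar hd hchar ha1 han hrep (hCN1 hc) hB'N2 hB'c
    have h2 : w' k + w' M ≤ ∑ x ∈ N2 \ B', w' x := by
      have := Finset.sum_le_sum_of_subset (f := w') hpair
      rwa [Finset.sum_pair (Ne.symm hMk)] at this
    omega
  have hCsum : e * (w' k + w' M + 1) ≤ ∑ x ∈ C, w' x := by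
    calc e * (w' k + w' M + 1) = C.card • (w' k + w' M + 1) := by rw [smul_eq_mul, hCc]
    _ ≤ ∑ x ∈ C, w' x := Finset.card_nsmul_le_sum C w' _ hCbound
  have hEsum : ∑ x ∈ E, w' x ≤ e * w' M := by
    calc ∑ x ∈ E, w' x ≤ E.card • w' M := Finset.sum_le_card_nsmul E w' _ hMmax
    _ = e * w' M := by rw [smul_eq_mul, hEc]
  have hmul : e * (w' k + w' M + 1) = e * w' k + e * w' M + e := by ring
  have hwk : w' k ≤ e * w' k := Nat.le_mul_of_pos_left _ hpos
  omega

end Aux3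
section Aux4

lemma arith_forward (a b n2 x y W1 W2 : ℕ)
    (hW1 : W1 = (n2 - b) * W2 + 1) (hbn : b + 1 ≤ n2)
    (h1 : a ≤ x) (h2 : a + b ≤ x + y) :
    a * W1 + b * W2 ≤ x * W1 + y * W2 := by
  have hw12 : W2 ≤ W1 := by
    have h1 : 1 ≤ n2 - b := by omega
    calc W2 = 1 * W2 := (one_mul _).symm
    _ ≤ (n2 - b) * W2 := Nat.mul_le_mul_right _ h1
    _ ≤ W1 := by omega
  rcases le_or_gt b y with hby | hby
  · exact add_le_add (Nat.mul_le_mul_right _ h1) (Nat.mul_le_mul_right _ hby)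
  · obtain ⟨z, hz⟩ : ∃ z, b = y + z := ⟨b - y, by omega⟩
    obtain ⟨u, hu⟩ : ∃ u, x = a + z + u := ⟨x - (a + z), by omega⟩
    have e1 : x * W1 = a * W1 + z * W1 + u * W1 := by rw [hu]; ring
    have e2 : b * W2 = y * W2 + z * W2 := by rw [hz]; ring
    have e3 : z * W2 ≤ z * W1 := Nat.mul_le_mul_left _ hw12
    omega

lemma arith_backward (a b n1 n2 x y W1 W2 : ℕ)
    (hW2 : W2 = min (n1 - a + 1) b) (hW1 : W1 = (n2 - b) * W2 + 1)
    (ha1 : 1 ≤ a) (han : a ≤ n1) (hbn : b + 1 ≤ n2)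
    (hkey0 : min (n1 - a) (b - 1) = 0 ∨ n2 = b + 1)
    (hx : x ≤ n1) (hy : y ≤ n2)
    (hnw : ¬ (a ≤ x ∧ a + b ≤ x + y)) :
    x * W1 + y * W2 + 1 ≤ a * W1 + b * W2 := by
  rcases le_or_gt a x with hax | hax
  · -- a ≤ x, so x + y < a + b
    have hxy : x + y + 1 ≤ a + b := by omega
    have hb1 : 1 ≤ b := by omega
    set E := min (n1 - a) (b - 1) with hE
    have hW2E : W2 = E + 1 := by omega
    obtain ⟨u, hu⟩ : ∃ u, x = a + u := ⟨x - a, by omega⟩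
    have huE : u ≤ E := by omega
    rcases hkey0 with h0 | h0
    · have hxa : x = a := by omega
      have hW2pos : 1 ≤ W2 := by omega
      have hyb : y + 1 ≤ b := by omega
      have e2' : (y + 1) * W2 ≤ b * W2 := Nat.mul_le_mul_right _ hyb
      have e2'' : (y + 1) * W2 = y * W2 + W2 := by ring
      rw [hxa]
      omega
    · obtain ⟨t, ht⟩ : ∃ t, b = y + u + 1 + t := ⟨b - (y + u + 1), by omega⟩
      have e1 : x * W1 = a * W1 + u * W1 := by rw [hu]; ring
      have e2 : b * W2 = y * W2 + u * W2 + W2 + t * W2 := by rw [ht]; ring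
      have hW1W2 : W1 = W2 + 1 := by
        rw [hW1]
        have h1 : n2 - b = 1 := by omega
        rw [h1]; ring
      have e3 : u * W1 = u * W2 + u := by rw [hW1W2]; ring
      omega
  · -- x < a
    obtain ⟨s, hs⟩ : ∃ s, a = x + 1 + s := ⟨a - x - 1, by omega⟩
    obtain ⟨t, ht⟩ : ∃ t, n2 = b + t := ⟨n2 - b, by omega⟩
    have e1 : a * W1 = x * W1 + W1 + s * W1 := by rw [hs]; ring
    have e3 : W1 = t * W2 + 1 := by
      have htt : n2 - b = t := by omega
      rw [hW1, htt]
    have e4 : y * W2 ≤ (b + t) * W2 := Nat.mul_le_mul_right _ (by omega)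
    have e5 : (b + t) * W2 = b * W2 + t * W2 := by ring
    omega

lemma sum_weights {n : ℕ} {N1 N2 U : Finset (Fin n)} (hN : N1 ∪ N2 = Finset.univ)
    (hd : Disjoint N1 N2) (W1 W2 : ℕ) :
    ∑ i ∈ U, (if i ∈ N1 then W1 else W2) =
      (U ∩ N1).card * W1 + (U ∩ N2).card * W2 := by
  have hU : (U ∩ N1) ∪ (U ∩ N2) = U := by
    rw [← Finset.inter_union_distrib_left, hN, Finset.inter_univ]
  have hdisj : Disjoint (U ∩ N1) (U ∩ N2) :=
    hd.mono (Finset.inter_subset_right) (Finset.inter_subset_right)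
  have h1 : ∑ i ∈ U ∩ N1, (if i ∈ N1 then W1 else W2) = (U ∩ N1).card * W1 := by
    rw [Finset.sum_congr rfl (fun i hi => if_pos (Finset.mem_inter.mp hi).2),
      Finset.sum_const, smul_eq_mul]
  have h2 : ∑ i ∈ U ∩ N2, (if i ∈ N1 then W1 else W2) = (U ∩ N2).card * W2 := by
    rw [Finset.sum_congr rfl (fun i hi =>
      if_neg (Finset.disjoint_right.mp hd (Finset.mem_inter.mp hi).2)),
      Finset.sum_const, smul_eq_mul]
  calc ∑ i ∈ U, (if i ∈ N1 then W1 else W2)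
      = ∑ i ∈ (U ∩ N1) ∪ (U ∩ N2), (if i ∈ N1 then W1 else W2) := by rw [hU]
    _ = _ := by rw [Finset.sum_union hdisj, h1, h2]

end Aux4
theorem stmt1 (n : ℕ) (χ : Finset (Fin n) → Prop) (hsg : SimpleGame n χ)
    (hwt : IsWeighted χ) (N1 N2 : Finset (Fin n)) (h2 : TwoTypes χ N1 N2)
    (hr : NumWinTypes2 χ N1 N2 = 1) :
    ∃ (q : ℕ) (w : Fin n → ℕ), MinRep χ q w := by
  obtain ⟨hmono, hempty, huniv⟩ := hsg
  obtain ⟨hne1, hne2, hd, hN, hE1, hE2, hS⟩ := id h2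
  rw [NumWinTypes2] at hr
  obtain ⟨p0, hp0⟩ := Set.ncard_eq_one.mp hr
  have hp0mem : p0 ∈ {p : ℕ × ℕ |
      ∃ U, ShiftMinWin χ U ∧ p = ((U ∩ N1).card, (U ∩ N2).card)} := by
    rw [hp0]; exact rfl
  obtain ⟨U0, hU0smw, hU0p⟩ := hp0mem
  set a := (U0 ∩ N1).card with ha
  set b := (U0 ∩ N2).card with hb
  have huniq : ∀ U, ShiftMinWin χ U → (U ∩ N1).card = a ∧ (U ∩ N2).card = b := by
    intro U hU
    have hmem : ((U ∩ N1).card, (U ∩ N2).card) ∈ {p : ℕ × ℕ |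
        ∃ V, ShiftMinWin χ V ∧ p = ((V ∩ N1).card, (V ∩ N2).card)} := ⟨U, hU, rfl⟩
    rw [hp0] at hmem
    have h2' : ((U ∩ N1).card, (U ∩ N2).card) = p0 := hmem
    rw [hU0p] at h2'
    exact ⟨congrArg Prod.fst h2', congrArg Prod.snd h2'⟩
  have hU0w : χ U0 := hU0smw.1
  have hchar : ∀ U : Finset (Fin n), χ U ↔
      (a ≤ (U ∩ N1).card ∧ a + b ≤ (U ∩ N1).card + (U ∩ N2).card) := by
    intro U
    constructor
    · exact win_ge h2 hempty huniq U
    · intro hh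
      exact win_of_counts h2 hmono hU0w rfl rfl U hh.1 hh.2
  have han : a ≤ N1.card := Finset.card_le_card Finset.inter_subset_right
  have hbN : b ≤ N2.card := Finset.card_le_card Finset.inter_subset_right
  obtain ⟨i0, hi0⟩ := id hne1
  obtain ⟨j0, hj0⟩ := id hne2
  have hi0N2 : i0 ∉ N2 := Finset.disjoint_left.mp hd hi0
  have hj0N1 : j0 ∉ N1 := Finset.disjoint_right.mp hd hj0
  have ha1 : 1 ≤ a := by
    by_contra h
    have ha0 : a = 0 := by omega
    apply (hS i0 hi0 j0 hj0).2
    intro U hiU hjU hwU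
    rw [hchar] at hwU ⊢
    have hc1 : ((insert j0 (U.erase i0)) ∩ N1).card = (U ∩ N1).card - 1 := by
      rw [inter_swap_out hj0N1,
        Finset.card_erase_of_mem (Finset.mem_inter.mpr ⟨hiU, hi0⟩)]
    have hc2 : ((insert j0 (U.erase i0)) ∩ N2).card = (U ∩ N2).card + 1 := by
      rw [inter_swap_in hi0N2 hj0, Finset.card_insert_of_notMem
        (fun h => hjU (Finset.mem_inter.mp h).1)]
    have hx1 : 1 ≤ (U ∩ N1).card :=
      Finset.card_pos.mpr ⟨i0, Finset.mem_inter.mpr ⟨hiU, hi0⟩⟩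
    rw [hc1, hc2]
    omega
  have hbn : b + 1 ≤ N2.card := by
    by_contra h
    have hbe : b = N2.card := by omega
    apply (hS i0 hi0 j0 hj0).2
    intro U hiU hjU hwU
    rw [hchar] at hwU ⊢
    have hc1 : ((insert j0 (U.erase i0)) ∩ N1).card = (U ∩ N1).card - 1 := by
      rw [inter_swap_out hj0N1,
        Finset.card_erase_of_mem (Finset.mem_inter.mpr ⟨hiU, hi0⟩)]
    have hc2 : ((insert j0 (U.erase i0)) ∩ N2).card = (U ∩ N2).card + 1 := by
      rw [inter_swap_in hi0N2 hj0, Finset.card_insert_of_notMem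
        (fun h => hjU (Finset.mem_inter.mp h).1)]
    have hysub : U ∩ N2 ⊆ N2.erase j0 := by
      intro x hx
      rw [Finset.mem_erase]
      exact ⟨fun he => hjU (he ▸ (Finset.mem_inter.mp hx).1),
        (Finset.mem_inter.mp hx).2⟩
    have hyb : (U ∩ N2).card ≤ N2.card - 1 := by
      have := Finset.card_le_card hysub
      rwa [Finset.card_erase_of_mem hj0] at this
    have hx1 : 1 ≤ (U ∩ N1).card :=
      Finset.card_pos.mpr ⟨i0, Finset.mem_inter.mpr ⟨hiU, hi0⟩⟩
    have hN2pos : 1 ≤ N2.card := Finset.card_pos.mpr ⟨j0, hj0⟩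
    rw [hc1, hc2]
    omega
  obtain ⟨q0, w0, hrep0⟩ := hwt
  have hkey0 : min (N1.card - a) (b - 1) = 0 ∨ N2.card = b + 1 := by
    by_contra h
    push_neg at h
    obtain ⟨h1, h2'⟩ := h
    have he1 : 1 ≤ min (N1.card - a) (b - 1) := by omega
    have hb1 : 1 ≤ b := by omega
    exact infeas hd hchar ha1 han (by omega) hb1 hne2 hrep0 he1
  set W2 := min (N1.card - a + 1) b with hW2
  set W1 := (N2.card - b) * W2 + 1 with hW1
  refine ⟨a * W1 + b * W2, fun i => if i ∈ N1 then W1 else W2, ?_, ?_⟩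
  · -- IsRep
    intro U
    rw [sum_weights hN hd, hchar]
    constructor
    · intro hh
      exact arith_forward a b N2.card _ _ W1 W2 hW1 hbn hh.1 hh.2
    · intro hq
      by_contra hnw
      have := arith_backward a b N1.card N2.card ((U ∩ N1).card) ((U ∩ N2).card)
        W1 W2 hW2 hW1 ha1 han hbn hkey0
        (Finset.card_le_card Finset.inter_subset_right)
        (Finset.card_le_card Finset.inter_subset_right) hnw
      omega
  · -- minimality
    intro q' w' hrep' i
    by_cases hi : i ∈ N1
    · simp only [if_pos hi]
      obtain ⟨B, hB, hBc⟩ := Finset.exists_subset_card_eq hbN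
      have h1 := Lstar hd hchar ha1 han hrep' hi hB hBc
      have h2' : (N2.card - b) * W2 ≤ ∑ x ∈ N2 \ B, w' x := by
        rcases Nat.eq_zero_or_pos b with hb0 | hb1
        · have hW2z : W2 = 0 := by rw [hW2, hb0]; simp
          rw [hW2z, Nat.mul_zero]
          exact Nat.zero_le _
        · have hW2E : W2 = min (N1.card - a) (b - 1) + 1 := by omega
          have hcd : (N2 \ B).card = N2.card - b := by
            rw [Finset.card_sdiff_of_subset hB, hBc]
          calc (N2.card - b) * W2 = (N2 \ B).card • W2 := by
                rw [hcd, smul_eq_mul]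
          _ ≤ ∑ x ∈ N2 \ B, w' x := Finset.card_nsmul_le_sum _ _ _ (fun k hk => by
                rw [hW2E]
                exact LT2 hd hchar ha1 han hbn hb1 hrep'
                  (Finset.mem_sdiff.mp hk).1)
      omega
    · have hiN2 : i ∈ N2 := by
        rcases Finset.mem_union.mp (hN ▸ Finset.mem_univ i) with h | h
        · exact absurd h hi
        · exact h
      simp only [if_neg hi]
      rcases Nat.eq_zero_or_pos b with hb0 | hb1
      · have hW2z : W2 = 0 := by rw [hW2, hb0]; simp
        rw [hW2z]
        exact Nat.zero_le _
      · have hW2E : W2 = min (N1.card - a) (b - 1) + 1 := by omega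
        rw [hW2E]
        exact LT2 hd hchar ha1 han hbn hb1 hrep' hiN2
end

section
/- Let χ be a weighted game on n voters with exactly two types of voters such that every voter of one of the two equivalence classes is a null voter. Then χ admits a minimum integer representation. -/
lemma null_erase {n : ℕ} {χ : Finset (Fin n) → Prop} {i : Fin n}
    (hi : NullVoter χ i) (U : Finset (Fin n)) : χ (U.erase i) ↔ χ U := by
  by_cases h : i ∈ U
  · rw [← hi (U.erase i), Finset.insert_erase h]
  · rw [Finset.erase_eq_of_notMem h]

lemma null_desir {n : ℕ} {χ : Finset (Fin n) → Prop}
    (mono : ∀ U V : Finset (Fin n), U ⊆ V → χ U → χ V)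
    {i : Fin n} (hi : NullVoter χ i) (j : Fin n) : Desir χ j i := by
  intro U hiU hjU hU
  refine mono _ _ (Finset.subset_insert _ _) ?_
  exact (null_erase hi U).2 hU

lemma sdiff_null {n : ℕ} {χ : Finset (Fin n) → Prop}
    (S : Finset (Fin n)) (hS : ∀ j ∈ S, NullVoter χ j) (U : Finset (Fin n)) :
    χ (U \ S) ↔ χ U := by
  induction S using Finset.induction_on with
  | empty => simp
  | @insert j S hj ih =>
    have h1 : U \ insert j S = (U \ S).erase j := by
      ext x; simp [Finset.mem_sdiff, Finset.mem_erase]; tauto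
    rw [h1, null_erase (hS j (Finset.mem_insert_self j S)) (U \ S)]
    exact ih (fun k hk => hS k (Finset.mem_insert_of_mem hk))

lemma swap_card {n : ℕ} {χ : Finset (Fin n) → Prop} {N1 : Finset (Fin n)}
    (heq : ∀ i ∈ N1, ∀ j ∈ N1, VEquiv χ i j) :
    ∀ k (V V' : Finset (Fin n)), (V \ V').card = k → V ⊆ N1 → V' ⊆ N1 →
      V.card = V'.card → χ V → χ V' := by
  intro k
  induction k using Nat.strong_induction_on with
  | _ k ih =>
    intro V V' hk hV hV' hcard hχ
    by_cases h0 : V \ V' = ∅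
    · have : V = V' := Finset.eq_of_subset_of_card_le
        (Finset.sdiff_eq_empty_iff_subset.1 h0) (le_of_eq hcard.symm)
      rwa [← this]
    · obtain ⟨i, hi⟩ := Finset.nonempty_of_ne_empty h0
      have hVV' : (V' \ V).Nonempty := by
        rw [Finset.nonempty_iff_ne_empty]
        intro h
        have : V' = V := Finset.eq_of_subset_of_card_le
          (Finset.sdiff_eq_empty_iff_subset.1 h) (le_of_eq hcard)
        rw [this] at h0
        simp at h0
      obtain ⟨j, hj⟩ := hVV'
      rw [Finset.mem_sdiff] at hi hj
      have hd : Desir χ j i := (heq i (hV hi.1) j (hV' hj.1)).2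
      have hχ1 : χ (insert j (V.erase i)) := hd V hi.1 hj.2 hχ
      set V1 := insert j (V.erase i) with hV1
      have hsd : V1 \ V' = (V \ V').erase i := by
        ext x
        simp only [hV1, Finset.mem_sdiff, Finset.mem_insert, Finset.mem_erase]
        constructor
        · rintro ⟨h1 | ⟨h1, h2⟩, h3⟩
          · exact absurd (h1 ▸ hj.1) h3
          · exact ⟨h1, h2, h3⟩
        · rintro ⟨h1, h2, h3⟩
          exact ⟨Or.inr ⟨h1, h2⟩, h3⟩
      have hclt : ((V \ V').erase i).card < k := by
        have h1 : ((V \ V').erase i).card < (V \ V').card :=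
          Finset.card_erase_lt_of_mem (Finset.mem_sdiff.2 hi)
        omega
      have hc1 : V1.card = V.card := by
        have h2 : 1 ≤ V.card := Finset.card_pos.2 ⟨i, hi.1⟩
        rw [hV1, Finset.card_insert_of_notMem (by simp [hj.2]),
          Finset.card_erase_of_mem hi.1]
        omega
      have hsub1 : V1 ⊆ N1 := by
        intro x hx
        rcases Finset.mem_insert.1 hx with h | h
        · exact h ▸ hV' hj.1
        · exact hV (Finset.erase_subset _ _ h)
      have hlt : (V1 \ V').card < k := by rw [hsd]; exact hclt
      exact ih _ hlt V1 V' rfl hsub1 hV' (hc1.trans hcard) hχ1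

theorem stmt2 (n : ℕ) (χ : Finset (Fin n) → Prop) (hsg : SimpleGame n χ)
    (hwt : IsWeighted χ) (N1 N2 : Finset (Fin n)) (h2 : TwoTypes χ N1 N2)
    (hnull : (∀ i ∈ N1, NullVoter χ i) ∨ (∀ i ∈ N2, NullVoter χ i)) :
    ∃ (q : ℕ) (w : Fin n → ℕ), MinRep χ q w := by
  obtain ⟨mono, hemp, huniv⟩ := hsg
  obtain ⟨hne1, hne2, hdisj, hcup, heq1, _heq2, hsd⟩ := h2
  have hnull2 : ∀ i ∈ N2, NullVoter χ i := by
    rcases hnull with h | h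
    · exfalso
      obtain ⟨i, hi⟩ := hne1
      obtain ⟨j, hj⟩ := hne2
      exact (hsd i hi j hj).2 (null_desir mono (h i hi) j)
    · exact h
  have hmem : ∀ x : Fin n, x ∈ N1 ↔ x ∉ N2 := by
    intro x
    have hx := Finset.mem_univ x
    rw [← hcup, Finset.mem_union] at hx
    have hd := Finset.disjoint_left.1 hdisj
    tauto
  have hUN1 : ∀ U : Finset (Fin n), χ (U ∩ N1) ↔ χ U := by
    intro U
    have h1 : U ∩ N1 = U \ N2 := by
      ext x
      simp only [Finset.mem_inter, Finset.mem_sdiff, hmem x]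
    rw [h1]
    exact sdiff_null N2 hnull2 U
  set S : Set ℕ := {k | ∃ V : Finset (Fin n), V ⊆ N1 ∧ V.card = k ∧ χ V} with hS
  have hSne : S.Nonempty := by
    refine ⟨N1.card, N1, Finset.Subset.refl _, rfl, ?_⟩
    have := (hUN1 Finset.univ).2 huniv
    rwa [Finset.univ_inter] at this
  set w : Fin n → ℕ := fun i => if i ∈ N1 then 1 else 0 with hw
  have hsum : ∀ U : Finset (Fin n), ∑ i ∈ U, w i = (U ∩ N1).card := by
    intro U
    simp [hw, Finset.sum_ite_mem]
  refine ⟨sInf S, w, ?_, ?_⟩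
  · intro U
    rw [hsum U]
    constructor
    · intro hU
      exact Nat.sInf_le ⟨U ∩ N1, Finset.inter_subset_right, rfl, (hUN1 U).2 hU⟩
    · intro hle
      obtain ⟨V, hVsub, hVcard, hVχ⟩ := Nat.sInf_mem hSne
      obtain ⟨W, hWsub, hWcard⟩ := Finset.exists_subset_card_eq (s := U ∩ N1) (n := sInf S) hle
      have hWN1 : W ⊆ N1 := hWsub.trans Finset.inter_subset_right
      have hχW : χ W := swap_card heq1 (V \ W).card V W rfl hVsub hWN1
        (by rw [hVcard, hWcard]) hVχ
      exact mono W U (hWsub.trans Finset.inter_subset_left) hχW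
  · intro q' w' hrep' i
    by_cases hi : i ∈ N1
    · simp only [hw, if_pos hi]
      by_contra hcon
      have hwi : w' i = 0 := by omega
      have hni : NullVoter χ i := by
        intro U
        rw [hrep' (insert i U), hrep' U]
        by_cases h : i ∈ U
        · rw [Finset.insert_eq_self.2 h]
        · rw [Finset.sum_insert h, hwi, zero_add]
      obtain ⟨j, hj⟩ := hne2
      exact (hsd i hi j hj).2 (null_desir mono hni j)
    · simp [hw, if_neg hi]
end

section
/- Let χ be a weighted game on n voters with exactly two types of voters, without null voters, and with at least two distinct types of shift-minimal winning coalitions (r ≥ 2). Then every LP-feasible triple (w1, w2, q) of nonnegative reals satisfies w2 ≥ 1. -/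
section Aux

variable {n : ℕ} {χ : Finset (Fin n) → Prop} {N1 N2 : Finset (Fin n)}

lemma card_le_n (S : Finset (Fin n)) : S.card ≤ n := by
  simpa using Finset.card_le_univ S

lemma aux_inter_insert_card {A U : Finset (Fin n)} {k : Fin n}
    (hk : k ∈ A) (hkU : k ∉ U) : ((insert k U) ∩ A).card = (U ∩ A).card + 1 := by
  rw [Finset.insert_inter_of_mem hk, Finset.card_insert_of_notMem (by simp [hkU])]

lemma aux_inter_erase_card {A U : Finset (Fin n)} {j : Fin n}
    (hj : j ∈ U) (hjA : j ∈ A) : ((U.erase j) ∩ A).card + 1 = (U ∩ A).card := by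
  rw [Finset.erase_inter, Finset.card_erase_of_mem (by simp [hj, hjA])]
  have : 0 < (U ∩ A).card := Finset.card_pos.mpr ⟨j, Finset.mem_inter.mpr ⟨hj, hjA⟩⟩
  omega

lemma aux_inter_erase_eq {A U : Finset (Fin n)} {j : Fin n} (hjA : j ∉ A) :
    (U.erase j) ∩ A = U ∩ A := by
  rw [Finset.erase_inter, Finset.erase_eq_of_notMem (by simp [hjA])]

lemma swap_cards_same {A B U : Finset (Fin n)} {i j : Fin n} (hAB : Disjoint A B)
    (hiA : i ∈ A) (hjA : j ∈ A) (hjU : j ∈ U) (hiU : i ∉ U) :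
    ((insert i (U.erase j)) ∩ A).card = (U ∩ A).card ∧
    ((insert i (U.erase j)) ∩ B) = U ∩ B := by
  constructor
  · have h1 : ((insert i (U.erase j)) ∩ A).card = ((U.erase j) ∩ A).card + 1 :=
      aux_inter_insert_card hiA (fun h => hiU (Finset.mem_of_mem_erase h))
    have h2 := aux_inter_erase_card (A := A) hjU hjA
    omega
  · have hiB : i ∉ B := Finset.disjoint_left.mp hAB hiA
    have hjB : j ∉ B := Finset.disjoint_left.mp hAB hjA
    rw [Finset.insert_inter_of_notMem hiB, aux_inter_erase_eq hjB]

lemma swap_cards_cross {U : Finset (Fin n)} {i j : Fin n} (hAB : Disjoint N1 N2)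
    (hi1 : i ∈ N1) (hj2 : j ∈ N2) (hjU : j ∈ U) (hiU : i ∉ U) :
    ((insert i (U.erase j)) ∩ N1).card = (U ∩ N1).card + 1 ∧
    ((insert i (U.erase j)) ∩ N2).card + 1 = (U ∩ N2).card := by
  have hi2 : i ∉ N2 := Finset.disjoint_left.mp hAB hi1
  have hj1 : j ∉ N1 := fun h => Finset.disjoint_left.mp hAB h hj2
  constructor
  · rw [aux_inter_insert_card hi1 (fun h => hiU (Finset.mem_of_mem_erase h)),
      aux_inter_erase_eq hj1]
  · rw [Finset.insert_inter_of_notMem hi2]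
    exact aux_inter_erase_card hjU hj2

lemma card_partition (hd : Disjoint N1 N2) (hu : N1 ∪ N2 = Finset.univ) (U : Finset (Fin n)) :
    (U ∩ N1).card + (U ∩ N2).card = U.card := by
  rw [← Finset.card_union_of_disjoint
      (hd.mono Finset.inter_subset_right Finset.inter_subset_right),
    ← Finset.inter_union_distrib_left, hu, Finset.inter_univ]

lemma mem_class (hu : N1 ∪ N2 = Finset.univ) (i : Fin n) : i ∈ N1 ∨ i ∈ N2 := by
  have h := Finset.mem_univ i
  rw [← hu, Finset.mem_union] at h
  exact h

lemma typeInv (hmono : ∀ U V : Finset (Fin n), U ⊆ V → χ U → χ V)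
    (hd : Disjoint N1 N2) (hu : N1 ∪ N2 = Finset.univ)
    (he1 : ∀ i ∈ N1, ∀ j ∈ N1, VEquiv χ i j) (he2 : ∀ i ∈ N2, ∀ j ∈ N2, VEquiv χ i j) :
    ∀ U V : Finset (Fin n), (U ∩ N1).card = (V ∩ N1).card →
      (U ∩ N2).card = (V ∩ N2).card → χ U → χ V := by
  suffices h : ∀ k, ∀ U V : Finset (Fin n), (U \ V).card = k →
      (U ∩ N1).card = (V ∩ N1).card → (U ∩ N2).card = (V ∩ N2).card → χ U → χ V by
    intro U V h1 h2 hU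
    exact h _ U V rfl h1 h2 hU
  intro k
  induction k using Nat.strong_induction_on with
  | _ k ih =>
  intro U V hk h1 h2 hU
  rcases Nat.eq_zero_or_pos k with hk0 | hkpos
  · subst hk0
    have hsub : U ⊆ V := by
      rw [← Finset.sdiff_eq_empty_iff_subset]
      exact Finset.card_eq_zero.mp hk
    have hcard : V.card ≤ U.card := by
      have pU := card_partition hd hu U
      have pV := card_partition hd hu V
      omega
    exact Finset.eq_of_subset_of_card_le hsub hcard ▸ hU
  · have hne : (U \ V).Nonempty := Finset.card_pos.mp (by omega)
    obtain ⟨j, hj⟩ := hne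
    have hjU : j ∈ U := (Finset.mem_sdiff.mp hj).1
    have hjV : j ∉ V := (Finset.mem_sdiff.mp hj).2
    rcases mem_class hu j with hjc | hjc
    · have hvne : ∃ i, i ∈ V ∩ N1 ∧ i ∉ U := by
        by_contra hcon
        push_neg at hcon
        have hsub : V ∩ N1 ⊆ U ∩ N1 := fun x hx =>
          Finset.mem_inter.mpr ⟨hcon x hx, (Finset.mem_inter.mp hx).2⟩
        have heq : V ∩ N1 = U ∩ N1 := Finset.eq_of_subset_of_card_le hsub (le_of_eq h1)
        have hjUV : j ∈ U ∩ N1 := Finset.mem_inter.mpr ⟨hjU, hjc⟩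
        rw [← heq] at hjUV
        exact hjV (Finset.mem_inter.mp hjUV).1
      obtain ⟨i, hiV1, hiU⟩ := hvne
      have hi1 : i ∈ N1 := (Finset.mem_inter.mp hiV1).2
      have hiV : i ∈ V := (Finset.mem_inter.mp hiV1).1
      have hU' : χ (insert i (U.erase j)) := (he1 i hi1 j hjc).1 U hjU hiU hU
      obtain ⟨hc1, hc2⟩ := swap_cards_same hd hi1 hjc hjU hiU
      have hsd : ((insert i (U.erase j)) \ V).card = k - 1 := by
        rw [Finset.insert_sdiff_of_mem _ hiV, Finset.erase_sdiff_comm,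
          Finset.card_erase_of_mem hj, hk]
      exact ih (k - 1) (by omega) _ V hsd (by rw [hc1]; exact h1) (by rw [hc2]; exact h2) hU'
    · have hvne : ∃ i, i ∈ V ∩ N2 ∧ i ∉ U := by
        by_contra hcon
        push_neg at hcon
        have hsub : V ∩ N2 ⊆ U ∩ N2 := fun x hx =>
          Finset.mem_inter.mpr ⟨hcon x hx, (Finset.mem_inter.mp hx).2⟩
        have heq : V ∩ N2 = U ∩ N2 := Finset.eq_of_subset_of_card_le hsub (le_of_eq h2)
        have hjUV : j ∈ U ∩ N2 := Finset.mem_inter.mpr ⟨hjU, hjc⟩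
        rw [← heq] at hjUV
        exact hjV (Finset.mem_inter.mp hjUV).1
      obtain ⟨i, hiV2, hiU⟩ := hvne
      have hi2 : i ∈ N2 := (Finset.mem_inter.mp hiV2).2
      have hiV : i ∈ V := (Finset.mem_inter.mp hiV2).1
      have hU' : χ (insert i (U.erase j)) := (he2 i hi2 j hjc).1 U hjU hiU hU
      obtain ⟨hc1, hc2⟩ := swap_cards_same hd.symm hi2 hjc hjU hiU
      have hsd : ((insert i (U.erase j)) \ V).card = k - 1 := by
        rw [Finset.insert_sdiff_of_mem _ hiV, Finset.erase_sdiff_comm,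
          Finset.card_erase_of_mem hj, hk]
      exact ih (k - 1) (by omega) _ V hsd (by rw [hc2]; exact h1) (by rw [hc1]; exact h2) hU'

lemma upswaps (hd : Disjoint N1 N2)
    (hstrict : ∀ i ∈ N1, ∀ j ∈ N2, StrictDesir χ i j) :
    ∀ k, ∀ U : Finset (Fin n), χ U → (U ∩ N1).card + k ≤ N1.card → k ≤ (U ∩ N2).card →
      ∃ U', χ U' ∧ (U' ∩ N1).card = (U ∩ N1).card + k ∧
        (U' ∩ N2).card + k = (U ∩ N2).card := by
  intro k
  induction k with
  | zero => intro U hU _ _; exact ⟨U, hU, by omega, by omega⟩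
  | succ m ih =>
    intro U hU hb1 hb2
    have hiex : ∃ i, i ∈ N1 ∧ i ∉ U := by
      by_contra hc
      push_neg at hc
      have hsub : N1 ⊆ U ∩ N1 := fun x hx => Finset.mem_inter.mpr ⟨hc x hx, hx⟩
      have := Finset.card_le_card hsub
      omega
    obtain ⟨i, hi1, hiU⟩ := hiex
    have hne2 : (U ∩ N2).Nonempty := Finset.card_pos.mp (by omega)
    obtain ⟨j, hj⟩ := hne2
    have hjU : j ∈ U := (Finset.mem_inter.mp hj).1
    have hj2 : j ∈ N2 := (Finset.mem_inter.mp hj).2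
    have hU' : χ (insert i (U.erase j)) := (hstrict i hi1 j hj2).1 U hjU hiU hU
    obtain ⟨hc1, hc2⟩ := swap_cards_cross hd hi1 hj2 hjU hiU
    obtain ⟨W, hW, hW1, hW2⟩ := ih (insert i (U.erase j)) hU' (by omega) (by omega)
    exact ⟨W, hW, by omega, by omega⟩

lemma up (hmono : ∀ U V : Finset (Fin n), U ⊆ V → χ U → χ V)
    (hd : Disjoint N1 N2) (hu : N1 ∪ N2 = Finset.univ)
    (he1 : ∀ i ∈ N1, ∀ j ∈ N1, VEquiv χ i j) (he2 : ∀ i ∈ N2, ∀ j ∈ N2, VEquiv χ i j)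
    (hstrict : ∀ i ∈ N1, ∀ j ∈ N2, StrictDesir χ i j)
    {U V : Finset (Fin n)} (hU : χ U)
    (hle1 : (U ∩ N1).card ≤ (V ∩ N1).card)
    (hle2 : (U ∩ N1).card + (U ∩ N2).card ≤ (V ∩ N1).card + (V ∩ N2).card) : χ V := by
  have ha'le : (V ∩ N1).card ≤ N1.card := Finset.card_le_card Finset.inter_subset_right
  set k := (U ∩ N2).card - (V ∩ N2).card with hkdef
  obtain ⟨U', hU', hc1, hc2⟩ := upswaps hd hstrict k U hU (by omega) (by omega)
  obtain ⟨S1, hS1sub, hS1card⟩ :=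
    Finset.exists_subset_card_eq (show (U ∩ N1).card + k ≤ (V ∩ N1).card by omega)
  obtain ⟨S2, hS2sub, hS2card⟩ :=
    Finset.exists_subset_card_eq (show (U ∩ N2).card - k ≤ (V ∩ N2).card by omega)
  have hS1N1 : S1 ⊆ N1 := hS1sub.trans Finset.inter_subset_right
  have hS2N2 : S2 ⊆ N2 := hS2sub.trans Finset.inter_subset_right
  have hWN1 : (S1 ∪ S2) ∩ N1 = S1 := by
    rw [Finset.union_inter_distrib_right, Finset.inter_eq_left.mpr hS1N1,
      Finset.disjoint_iff_inter_eq_empty.mp ((hd.symm).mono hS2N2 le_rfl),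
      Finset.union_empty]
  have hWN2 : (S1 ∪ S2) ∩ N2 = S2 := by
    rw [Finset.union_inter_distrib_right, Finset.inter_eq_left.mpr hS2N2,
      Finset.disjoint_iff_inter_eq_empty.mp (hd.mono hS1N1 le_rfl),
      Finset.empty_union]
  have hχW : χ (S1 ∪ S2) :=
    typeInv hmono hd hu he1 he2 U' (S1 ∪ S2)
      (by rw [hWN1, hS1card]; omega) (by rw [hWN2, hS2card]; omega) hU'
  exact hmono (S1 ∪ S2) V
    (Finset.union_subset (hS1sub.trans Finset.inter_subset_left)
      (hS2sub.trans Finset.inter_subset_left)) hχW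

lemma toShiftMax (hd : Disjoint N1 N2) (hu : N1 ∪ N2 = Finset.univ)
    (he1 : ∀ i ∈ N1, ∀ j ∈ N1, VEquiv χ i j) (he2 : ∀ i ∈ N2, ∀ j ∈ N2, VEquiv χ i j)
    (hstrict : ∀ i ∈ N1, ∀ j ∈ N2, StrictDesir χ i j) :
    ∀ m, ∀ U : Finset (Fin n), 3 * n - (2 * (U ∩ N1).card + (U ∩ N2).card) = m → ¬ χ U →
      ∃ C, ShiftMaxLose χ C ∧ (U ∩ N1).card ≤ (C ∩ N1).card ∧
        (U ∩ N1).card + (U ∩ N2).card ≤ (C ∩ N1).card + (C ∩ N2).card := by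
  intro m
  induction m using Nat.strong_induction_on with
  | _ m ih =>
  intro U hm hU
  by_cases hadd : ∃ kv, kv ∉ U ∧ ¬ χ (insert kv U)
  · obtain ⟨kv, hkU, hkL⟩ := hadd
    have ha1 : ((insert kv U) ∩ N1).card ≤ n := card_le_n _
    have hb1 : ((insert kv U) ∩ N2).card ≤ n := card_le_n _
    rcases mem_class hu kv with hk1 | hk2
    · have h1 := aux_inter_insert_card hk1 hkU
      have h2 : ((insert kv U) ∩ N2).card = (U ∩ N2).card := by
        rw [Finset.insert_inter_of_notMem (Finset.disjoint_left.mp hd hk1)]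
      obtain ⟨C, hC, hC1, hC2⟩ :=
        ih (3 * n - (2 * ((insert kv U) ∩ N1).card + ((insert kv U) ∩ N2).card))
          (by omega) (insert kv U) rfl hkL
      exact ⟨C, hC, by omega, by omega⟩
    · have h1 := aux_inter_insert_card hk2 hkU
      have h2 : ((insert kv U) ∩ N1).card = (U ∩ N1).card := by
        rw [Finset.insert_inter_of_notMem (fun h => Finset.disjoint_left.mp hd h hk2)]
      obtain ⟨C, hC, hC1, hC2⟩ :=
        ih (3 * n - (2 * ((insert kv U) ∩ N1).card + ((insert kv U) ∩ N2).card))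
          (by omega) (insert kv U) rfl hkL
      exact ⟨C, hC, by omega, by omega⟩
  · by_cases hswap : ∃ i j : Fin n, i ∈ N1 ∧ i ∉ U ∧ j ∈ N2 ∧ j ∈ U ∧
        ¬ χ (insert i (U.erase j))
    · obtain ⟨i, j, hi1, hiU, hj2, hjU, hL⟩ := hswap
      obtain ⟨hc1, hc2⟩ := swap_cards_cross hd hi1 hj2 hjU hiU
      have ha1 : ((insert i (U.erase j)) ∩ N1).card ≤ n := card_le_n _
      have hb1 : ((insert i (U.erase j)) ∩ N2).card ≤ n := card_le_n _
      obtain ⟨C, hC, hC1, hC2⟩ :=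
        ih (3 * n - (2 * ((insert i (U.erase j)) ∩ N1).card +
            ((insert i (U.erase j)) ∩ N2).card)) (by omega) (insert i (U.erase j)) rfl hL
      exact ⟨C, hC, by omega, by omega⟩
    · push_neg at hadd hswap
      refine ⟨U, ⟨hU, fun kv hk => hadd kv hk, ?_⟩, le_refl _, le_refl _⟩
      intro j hjU i hiU hsd
      rcases mem_class hu i with hi1 | hi2 <;> rcases mem_class hu j with hj1 | hj2
      · exact absurd (he1 j hj1 i hi1).1 hsd.2
      · exact hswap i j hi1 hiU hj2 hjU
      · exact absurd (hstrict j hj1 i hi2).1 hsd.2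
      · exact absurd (he2 j hj2 i hi2).1 hsd.2

lemma incomp (hmono : ∀ U V : Finset (Fin n), U ⊆ V → χ U → χ V)
    (hd : Disjoint N1 N2) (hu : N1 ∪ N2 = Finset.univ)
    (he1 : ∀ i ∈ N1, ∀ j ∈ N1, VEquiv χ i j) (he2 : ∀ i ∈ N2, ∀ j ∈ N2, VEquiv χ i j)
    (hstrict : ∀ i ∈ N1, ∀ j ∈ N2, StrictDesir χ i j)
    {U V : Finset (Fin n)} (hU : ShiftMinWin χ U) (hV : ShiftMinWin χ V)
    (hle1 : (U ∩ N1).card ≤ (V ∩ N1).card)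
    (hle2 : (U ∩ N1).card + (U ∩ N2).card ≤ (V ∩ N1).card + (V ∩ N2).card) :
    (U ∩ N1).card = (V ∩ N1).card ∧ (U ∩ N2).card = (V ∩ N2).card := by
  by_contra hne
  have hbN2 : (U ∩ N2).card ≤ N2.card := Finset.card_le_card Finset.inter_subset_right
  rcases eq_or_lt_of_le hle2 with hsum | hsum
  · have hlt : (U ∩ N1).card < (V ∩ N1).card := by
      rcases eq_or_lt_of_le hle1 with h | h
      · exact absurd ⟨h, by omega⟩ hne
      · exact h
    have hine : (V ∩ N1).Nonempty := Finset.card_pos.mp (by omega)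
    obtain ⟨i, hiV1⟩ := hine
    have hiV : i ∈ V := (Finset.mem_inter.mp hiV1).1
    have hi1 : i ∈ N1 := (Finset.mem_inter.mp hiV1).2
    have hjex : ∃ j, j ∈ N2 ∧ j ∉ V := by
      by_contra hc
      push_neg at hc
      have hsub : N2 ⊆ V ∩ N2 := fun x hx => Finset.mem_inter.mpr ⟨hc x hx, hx⟩
      have := Finset.card_le_card hsub
      omega
    obtain ⟨j, hj2, hjV⟩ := hjex
    have hL : ¬ χ (insert j (V.erase i)) := hV.2.2 i hiV j hjV (hstrict i hi1 j hj2)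
    obtain ⟨hc2, hc1⟩ := swap_cards_cross (N1 := N2) (N2 := N1) hd.symm hj2 hi1 hiV hjV
    exact hL (up hmono hd hu he1 he2 hstrict hU.1 (by omega) (by omega))
  · by_cases hb' : 0 < (V ∩ N2).card
    · obtain ⟨j, hj⟩ := Finset.card_pos.mp hb'
      have hjV : j ∈ V := (Finset.mem_inter.mp hj).1
      have hj2 : j ∈ N2 := (Finset.mem_inter.mp hj).2
      have hL : ¬ χ (V.erase j) := hV.2.1 j hjV
      have hcn1 : ((V.erase j) ∩ N1).card = (V ∩ N1).card := by
        rw [aux_inter_erase_eq (fun h => Finset.disjoint_left.mp hd h hj2)]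
      have hcn2 := aux_inter_erase_card hjV hj2
      exact hL (up hmono hd hu he1 he2 hstrict hU.1 (by omega) (by omega))
    · have ha'pos : 0 < (V ∩ N1).card := by
        by_contra hc
        push_neg at hc
        omega
      obtain ⟨i, hi⟩ := Finset.card_pos.mp ha'pos
      have hiV : i ∈ V := (Finset.mem_inter.mp hi).1
      have hi1 : i ∈ N1 := (Finset.mem_inter.mp hi).2
      have hL : ¬ χ (V.erase i) := hV.2.1 i hiV
      have hcn1 := aux_inter_erase_card hiV hi1
      have hcn2 : ((V.erase i) ∩ N2).card = (V ∩ N2).card := by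
        rw [aux_inter_erase_eq (Finset.disjoint_left.mp hd hi1)]
      exact hL (up hmono hd hu he1 he2 hstrict hU.1 (by omega) (by omega))

lemma key (hsg : SimpleGame n χ) (h2 : TwoTypes χ N1 N2) {U V : Finset (Fin n)}
    (hU : ShiftMinWin χ U) (hV : ShiftMinWin χ V)
    (ha : (V ∩ N1).card < (U ∩ N1).card)
    (hs : (U ∩ N1).card + (U ∩ N2).card < (V ∩ N1).card + (V ∩ N2).card)
    {w1 w2 q : ℝ} (hlp : LPFeasible χ N1 N2 w1 w2 q) : 1 ≤ w2 := by
  obtain ⟨hN1, hN2, hd, hu, he1, he2, hstrict⟩ := h2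
  obtain ⟨hmono, hempty, huniv⟩ := hsg
  obtain ⟨hw1, hw2, hq, hwin, hlose⟩ := hlp
  have hbV : (V ∩ N2).card ≤ N2.card := Finset.card_le_card Finset.inter_subset_right
  -- Step 1 : from U, get w2 + 1 ≤ w1
  have hi0ne : (U ∩ N1).Nonempty := Finset.card_pos.mp (by omega)
  obtain ⟨i0, hi0m⟩ := hi0ne
  have hi0U : i0 ∈ U := (Finset.mem_inter.mp hi0m).1
  have hi0N1 : i0 ∈ N1 := (Finset.mem_inter.mp hi0m).2
  have hj0ex : ∃ j, j ∈ N2 ∧ j ∉ U := by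
    by_contra hc
    push_neg at hc
    have hsub : N2 ⊆ U ∩ N2 := fun x hx => Finset.mem_inter.mpr ⟨hc x hx, hx⟩
    have := Finset.card_le_card hsub
    omega
  obtain ⟨j0, hj0N2, hj0U⟩ := hj0ex
  have hA : ¬ χ (insert j0 (U.erase i0)) :=
    hU.2.2 i0 hi0U j0 hj0U (hstrict i0 hi0N1 j0 hj0N2)
  obtain ⟨hA2, hA1⟩ := swap_cards_cross (N1 := N2) (N2 := N1) hd.symm hj0N2 hi0N1 hi0U hj0U
  obtain ⟨C', hC', hC'1, hC'2⟩ := toShiftMax hd hu he1 he2 hstrict _ _ rfl hA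
  have hl1 : (C' ∩ N1).card + 1 = (U ∩ N1).card := by
    rcases Nat.lt_or_ge ((C' ∩ N1).card) ((U ∩ N1).card) with h | h
    · omega
    · exact absurd (up hmono hd hu he1 he2 hstrict hU.1 h (by omega)) hC'.1
  have hl2 : (U ∩ N2).card + 1 ≤ (C' ∩ N2).card := by omega
  have hLP1 := hlose C' hC'
  have hLPU := hwin U hU
  have hcast1 : ((C' ∩ N1).card : ℝ) + 1 = ((U ∩ N1).card : ℝ) := by exact_mod_cast hl1
  have hcast2 : ((U ∩ N2).card : ℝ) + 1 ≤ ((C' ∩ N2).card : ℝ) := by exact_mod_cast hl2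
  have hstep1 : w2 + 1 ≤ w1 := by
    nlinarith [mul_nonneg (by linarith : (0:ℝ) ≤ ((C' ∩ N2).card : ℝ) - ((U ∩ N2).card : ℝ) - 1) hw2]
  -- Step 2 : from V, conclude 1 ≤ w2
  have hj1ne : (V ∩ N2).Nonempty := Finset.card_pos.mp (by omega)
  obtain ⟨j1, hj1m⟩ := hj1ne
  have hj1V : j1 ∈ V := (Finset.mem_inter.mp hj1m).1
  have hj1N2 : j1 ∈ N2 := (Finset.mem_inter.mp hj1m).2
  have hB : ¬ χ (V.erase j1) := hV.2.1 j1 hj1V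
  have hB1 : ((V.erase j1) ∩ N1).card = (V ∩ N1).card := by
    rw [aux_inter_erase_eq (fun h => Finset.disjoint_left.mp hd h hj1N2)]
  have hB2 := aux_inter_erase_card hj1V hj1N2
  obtain ⟨C, hC, hCa, hCs⟩ := toShiftMax hd hu he1 he2 hstrict _ _ rfl hB
  have hLP2 := hlose C hC
  have hLPV := hwin V hV
  have hn1 : (V ∩ N1).card ≤ (C ∩ N1).card := by omega
  have hn2 : (V ∩ N1).card + (V ∩ N2).card ≤ (C ∩ N1).card + (C ∩ N2).card + 1 := by omega
  have hc1 : ((V ∩ N1).card : ℝ) ≤ ((C ∩ N1).card : ℝ) := by exact_mod_cast hn1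
  have hc2 : ((V ∩ N1).card : ℝ) + ((V ∩ N2).card : ℝ) ≤
      ((C ∩ N1).card : ℝ) + ((C ∩ N2).card : ℝ) + 1 := by exact_mod_cast hn2
  nlinarith [mul_nonneg (by linarith : (0:ℝ) ≤ ((C ∩ N1).card : ℝ) - ((V ∩ N1).card : ℝ))
      (by linarith : (0:ℝ) ≤ w1 - w2 - 1),
    mul_nonneg (by linarith : (0:ℝ) ≤ ((C ∩ N1).card : ℝ) + ((C ∩ N2).card : ℝ) + 1 -
      (((V ∩ N1).card : ℝ) + ((V ∩ N2).card : ℝ))) hw2]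

end Aux

theorem stmt5 (n : ℕ) (χ : Finset (Fin n) → Prop) (hsg : SimpleGame n χ)
    (hwt : IsWeighted χ) (N1 N2 : Finset (Fin n)) (h2 : TwoTypes χ N1 N2)
    (hnull : ∀ i, ¬ NullVoter χ i) (hr : 2 ≤ NumWinTypes2 χ N1 N2) :
    ∀ w1 w2 q : ℝ, LPFeasible χ N1 N2 w1 w2 q → 1 ≤ w2 := by
  intro w1 w2 q hlp
  have hmono := hsg.1
  have hd := h2.2.2.1
  have hu := h2.2.2.2.1
  have he1 := h2.2.2.2.2.1
  have he2 := h2.2.2.2.2.2.1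
  have hstrict := h2.2.2.2.2.2.2
  have hr' : 2 ≤ Set.ncard {p : ℕ × ℕ | ∃ U, ShiftMinWin χ U ∧
      p = ((U ∩ N1).card, (U ∩ N2).card)} := hr
  have hfin : {p : ℕ × ℕ | ∃ U, ShiftMinWin χ U ∧
      p = ((U ∩ N1).card, (U ∩ N2).card)}.Finite := by
    by_contra hinf
    rw [Set.Infinite.ncard hinf] at hr'
    omega
  rw [show (2 : ℕ) ≤ Set.ncard _ ↔ 1 < Set.ncard _ from Iff.rfl,
    Set.one_lt_ncard_iff hfin] at hr'
  obtain ⟨p, p', hp, hp', hpp⟩ := hr'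
  simp only [Set.mem_setOf_eq] at hp hp'
  obtain ⟨U, hU, hpU⟩ := hp
  obtain ⟨V, hV, hpV⟩ := hp'
  subst hpU
  subst hpV
  rcases lt_trichotomy ((U ∩ N1).card) ((V ∩ N1).card) with h | h | h
  · rcases Nat.lt_or_ge ((V ∩ N1).card + (V ∩ N2).card)
        ((U ∩ N1).card + (U ∩ N2).card) with hs | hs
    · exact key hsg h2 hV hU h hs hlp
    · exact absurd (incomp hmono hd hu he1 he2 hstrict hU hV h.le hs).1 (Nat.ne_of_lt h)
  · rcases Nat.le_total ((U ∩ N1).card + (U ∩ N2).card)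
        ((V ∩ N1).card + (V ∩ N2).card) with hs | hs
    · obtain ⟨e1, e2⟩ := incomp hmono hd hu he1 he2 hstrict hU hV h.le hs
      exact absurd (by rw [e1, e2]) hpp
    · obtain ⟨e1, e2⟩ := incomp hmono hd hu he1 he2 hstrict hV hU h.ge hs
      exact absurd (by rw [e1, e2]) hpp
  · rcases Nat.lt_or_ge ((U ∩ N1).card + (U ∩ N2).card)
        ((V ∩ N1).card + (V ∩ N2).card) with hs | hs
    · exact key hsg h2 hU hV h hs hlp
    · exact absurd (incomp hmono hd hu he1 he2 hstrict hV hU h.le hs).1 (Nat.ne_of_lt h)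
end

section
/- Let a, b ∈ ℕ with b > a ≥ 1 and gcd(a, b) = 1, and let n1 ≥ 2a + 1 and n2 ≥ 2b + 1. Let χ be the weighted game on n1 + n2 voters represented by [a·b; w], where w assigns weight b to each of the first n1 voters and weight a to each of the last n2 voters. Then this representation is a minimum integer representation of χ: every integer representation [q'; w'] of χ satisfies q' ≥ a·b, w' i ≥ b for each of the first n1 voters i, and w' i ≥ a for each of the last n2 voters i. -/
open Finset

private lemma sum_blk {n : ℕ} (E : ℕ → Fin n) (m : ℕ)
    (hE : ∀ s t : ℕ, E s = E t ↔ s % m = t % m) (f : Fin n → ℕ) (s l : ℕ) (hl : l ≤ m) :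
    ∑ j ∈ (range l).image (fun t => E (s + t)), f j = ∑ t ∈ range l, f (E (s + t)) := by
  apply Finset.sum_image
  intro t1 h1 t2 h2 he
  rw [hE] at he
  have h3 : t1 ≡ t2 [MOD m] := Nat.ModEq.add_left_cancel' s he
  rw [Nat.ModEq] at h3
  rw [Nat.mod_eq_of_lt (lt_of_lt_of_le (mem_range.mp h1) hl),
      Nat.mod_eq_of_lt (lt_of_lt_of_le (mem_range.mp h2) hl)] at h3
  exact h3

private lemma group_sum (f : ℕ → ℕ) (K l : ℕ) :
    ∑ k ∈ range K, ∑ t ∈ range l, f (k * l + t) = ∑ s ∈ range (K * l), f s := by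
  induction K with
  | zero => simp
  | succ K ih =>
    rw [Finset.sum_range_succ, ih, Nat.succ_mul, Finset.sum_range_add]

private lemma KEY {n : ℕ} (Q q' : ℕ) (wt w' : Fin n → ℕ)
    (hRep : ∀ U : Finset (Fin n), (Q ≤ ∑ j ∈ U, wt j) ↔ (q' ≤ ∑ j ∈ U, w' j))
    (F G : ℕ → Fin n) (mF mG : ℕ)
    (hF : ∀ s t : ℕ, F s = F t ↔ s % mF = t % mF)
    (hG : ∀ s t : ℕ, G s = G t ↔ s % mG = t % mG)
    (i : Fin n) (hFG : ∀ s t : ℕ, F s ≠ G t) (hGi : ∀ s : ℕ, G s ≠ i)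
    (cF cG lF g xF xG p r : ℕ)
    (hwF : ∀ s, wt (F s) = cF) (hwG : ∀ s, wt (G s) = cG) (hwi : wt i = cG)
    (hlF : lF ≤ mF) (hlG : g + 1 ≤ mG) (hxF : xF ≤ mF) (hxG : xG ≤ mG)
    (hQF : lF * cF = Q) (hQG : (g + 1) * cG = Q)
    (hbF : p * lF = (p + r + 1) * xF)
    (hbG : (r + 1) * (g + 1) = (p + r + 1) * xG + 1)
    (hloss : xF * cF + xG * cG + 1 = Q) :
    p + r + 1 ≤ w' i := by
  set K := p + r + 1 with hK
  -- block definitions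
  set BF : ℕ → ℕ → Finset (Fin n) := fun s l => (range l).image (fun t => F (s + t)) with hBF
  set BG : ℕ → ℕ → Finset (Fin n) := fun s l => (range l).image (fun t => G (s + t)) with hBG
  have hdisj : ∀ s l s' l', Disjoint (BF s l) (BG s' l') := by
    intro s l s' l'
    rw [Finset.disjoint_left]
    intro x hx hx'
    simp only [hBF, hBG, mem_image, mem_range] at hx hx'
    obtain ⟨t1, -, h1⟩ := hx; obtain ⟨t2, -, h2⟩ := hx'
    exact hFG _ _ (h1.trans h2.symm)
  have hiG : ∀ s l, i ∉ BG s l := by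
    intro s l h
    simp only [hBG, mem_image, mem_range] at h
    obtain ⟨t, -, h⟩ := h
    exact hGi _ h
  -- weight sums of blocks
  have wtF : ∀ s l, l ≤ mF → ∑ j ∈ BF s l, wt j = l * cF := by
    intro s l hl
    rw [hBF, sum_blk F mF hF wt s l hl]
    simp [hwF, mul_comm]
  have wtG : ∀ s l, l ≤ mG → ∑ j ∈ BG s l, wt j = l * cG := by
    intro s l hl
    rw [hBG, sum_blk G mG hG wt s l hl]
    simp [hwG, mul_comm]
  -- losses
  set SF := ∑ s ∈ range (K * xF), w' (F s) with hSF
  set SG := ∑ s ∈ range (K * xG), w' (G s) with hSG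
  have hlossk : ∀ k, (∑ t ∈ range xF, w' (F (k * xF + t))) +
      (∑ t ∈ range xG, w' (G (k * xG + t))) + 1 ≤ q' := by
    intro k
    have hwtL : ∑ j ∈ BF (k * xF) xF ∪ BG (k * xG) xG, wt j = xF * cF + xG * cG := by
      rw [Finset.sum_union (hdisj _ _ _ _), wtF _ _ hxF, wtG _ _ hxG]
    have hnotwin : ¬ (Q ≤ ∑ j ∈ BF (k * xF) xF ∪ BG (k * xG) xG, wt j) := by
      rw [hwtL]; omega
    rw [hRep] at hnotwin
    have h2 : ∑ j ∈ BF (k * xF) xF ∪ BG (k * xG) xG, w' j + 1 ≤ q' := by omega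
    rwa [Finset.sum_union (hdisj _ _ _ _), hBF, hBG,
      sum_blk F mF hF w' _ _ hxF, sum_blk G mG hG w' _ _ hxG] at h2
  have hA : SF + SG + K ≤ K * q' := by
    calc SF + SG + K
        = ∑ k ∈ range K, ((∑ t ∈ range xF, w' (F (k * xF + t))) +
            (∑ t ∈ range xG, w' (G (k * xG + t))) + 1) := by
          rw [Finset.sum_add_distrib, Finset.sum_add_distrib, hSF, hSG,
            group_sum (fun s => w' (F s)) K xF, group_sum (fun s => w' (G s)) K xG]
          simp
      _ ≤ ∑ k ∈ range K, q' := Finset.sum_le_sum (fun k _ => hlossk k)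
      _ = K * q' := by simp [mul_comm]
  -- wins
  have hwinF : ∀ k, q' ≤ ∑ t ∈ range lF, w' (F (k * lF + t)) := by
    intro k
    have hw : Q ≤ ∑ j ∈ BF (k * lF) lF, wt j := by rw [wtF _ _ hlF, hQF]
    rw [hRep] at hw
    rwa [hBF, sum_blk F mF hF w' _ _ hlF] at hw
  have hwinG : ∀ k, q' ≤ ∑ t ∈ range (g + 1), w' (G (k * (g + 1) + t)) := by
    intro k
    have hw : Q ≤ ∑ j ∈ BG (k * (g + 1)) (g + 1), wt j := by rw [wtG _ _ hlG, hQG]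
    rw [hRep] at hw
    rwa [hBG, sum_blk G mG hG w' _ _ hlG] at hw
  have hwinI : q' ≤ w' i + ∑ t ∈ range g, w' (G (r * (g + 1) + t)) := by
    have hw : Q ≤ ∑ j ∈ insert i (BG (r * (g + 1)) g), wt j := by
      rw [Finset.sum_insert (hiG _ _), wtG _ _ (by omega), hwi]
      have : cG + g * cG = (g + 1) * cG := by ring
      omega
    rw [hRep] at hw
    rwa [Finset.sum_insert (hiG _ _), hBG, sum_blk G mG hG w' _ _ (by omega)] at hw
  have hB : K * q' ≤ SF + SG + w' i := by
    have e1 : ∑ k ∈ range p, ∑ t ∈ range lF, w' (F (k * lF + t)) = SF := by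
      rw [group_sum (fun s => w' (F s)) p lF, hSF, hbF]
    have e2 : (∑ k ∈ range r, ∑ t ∈ range (g + 1), w' (G (k * (g + 1) + t))) +
        (∑ t ∈ range g, w' (G (r * (g + 1) + t))) = SG := by
      rw [group_sum (fun s => w' (G s)) r (g + 1), hSG]
      have hr : r * (g + 1) + g = K * xG := by
        have : (r + 1) * (g + 1) = r * (g + 1) + g + 1 := by ring
        omega
      rw [← hr, Finset.sum_range_add]
    calc K * q' = p * q' + r * q' + q' := by rw [hK]; ring
      _ ≤ (∑ k ∈ range p, ∑ t ∈ range lF, w' (F (k * lF + t)))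
          + (∑ k ∈ range r, ∑ t ∈ range (g + 1), w' (G (k * (g + 1) + t)))
          + (w' i + ∑ t ∈ range g, w' (G (r * (g + 1) + t))) := by
        have h1 : p * q' ≤ ∑ k ∈ range p, ∑ t ∈ range lF, w' (F (k * lF + t)) := by
          calc p * q' = ∑ _k ∈ range p, q' := by simp [mul_comm]
            _ ≤ _ := Finset.sum_le_sum (fun k _ => hwinF k)
        have h2 : r * q' ≤ ∑ k ∈ range r, ∑ t ∈ range (g + 1), w' (G (k * (g + 1) + t)) := by
          calc r * q' = ∑ _k ∈ range r, q' := by simp [mul_comm]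
            _ ≤ _ := Finset.sum_le_sum (fun k _ => hwinG k)
        exact add_le_add (add_le_add h1 h2) hwinI
      _ = SF + SG + w' i := by rw [e1]; omega
  have : K * q' + K ≤ K * q' + w' i := by
    calc K * q' + K ≤ (SF + SG + w' i) + K := by omega
      _ = (SF + SG + K) + w' i := by ring
      _ ≤ K * q' + w' i := by omega
  omega

private lemma case1 (a b n1 n2 x₀ y₀ q' : ℕ) (w' : Fin (n1+n2) → ℕ)
    (ha : 1 ≤ a) (hab : a < b) (hn1 : 2*a+1 ≤ n1) (hn2 : 2*b+1 ≤ n2)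
    (hx₀ : x₀ < a) (hy₀ : y₀ < b) (hxy : b*x₀ + a*y₀ + 1 = a*b)
    (hR : ∀ U : Finset (Fin (n1+n2)),
      (a*b ≤ ∑ j ∈ U, (if (j:ℕ) < n1 then b else a)) ↔ q' ≤ ∑ j ∈ U, w' j)
    (i : Fin (n1+n2)) (hi : (i:ℕ) < n1) : b ≤ w' i := by
  obtain ⟨g, hg⟩ : ∃ g, a = g + 1 := ⟨a-1, by omega⟩
  obtain ⟨r, hr⟩ : ∃ r, b = y₀ + r + 1 := ⟨b-y₀-1, by omega⟩
  have hn2p : 0 < n2 := by omega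
  have hm : 0 < n1 - 1 := by omega
  set F : ℕ → Fin (n1+n2) :=
    fun s => ⟨n1 + s % n2, Nat.add_lt_add_left (Nat.mod_lt _ hn2p) n1⟩ with hF0
  set qv : ℕ → ℕ :=
    fun s => if s % (n1-1) < (i:ℕ) then s % (n1-1) else s % (n1-1) + 1 with hqv
  have hqlt : ∀ s, qv s < n1 := by
    intro s; have h := Nat.mod_lt s hm; simp only [hqv]; split_ifs <;> omega
  set G : ℕ → Fin (n1+n2) := fun s => ⟨qv s, by have := hqlt s; omega⟩ with hG0
  have hF : ∀ s t : ℕ, F s = F t ↔ s % n2 = t % n2 := by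
    intro s t; simp [hF0, Fin.ext_iff]
  have hmodeq : ∀ u v : ℕ, u % (n1-1) = v % (n1-1) → qv u = qv v := by
    intro u v h; simp only [hqv, h]
  have hG : ∀ s t : ℕ, G s = G t ↔ s % (n1-1) = t % (n1-1) := by
    intro s t
    constructor
    · intro h
      have h2 : qv s = qv t := by simpa [hG0, Fin.ext_iff] using h
      simp only [hqv] at h2; split_ifs at h2 <;> omega
    · intro h; simp [hG0, Fin.ext_iff, hmodeq s t h]
  have hFG : ∀ s t : ℕ, F s ≠ G t := by
    intro s t h
    have h2 : n1 + s % n2 = qv t := by simpa [hF0, hG0, Fin.ext_iff] using h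
    have := hqlt t; omega
  have hGi : ∀ s, G s ≠ i := by
    intro s h
    have h2 : qv s = (i:ℕ) := by simpa [hG0, Fin.ext_iff] using h
    simp only [hqv] at h2; split_ifs at h2 <;> omega
  have hwF : ∀ s, (if ((F s):ℕ) < n1 then b else a) = a := by
    intro s; rw [if_neg]; simp [hF0]
  have hwG : ∀ s, (if ((G s):ℕ) < n1 then b else a) = b := by
    intro s; rw [if_pos]; simp [hG0, hqlt s]
  have hbG : (r+1)*(g+1) = (y₀+r+1)*x₀ + 1 := by
    have h1 : a*(r+1) + a*y₀ = (b*x₀ + 1) + a*y₀ := by rw [show (b*x₀+1)+a*y₀ = b*x₀+a*y₀+1 by ring, hxy, hr]; ring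
    have h2 : a*(r+1) = b*x₀ + 1 := Nat.add_right_cancel h1
    calc (r+1)*(g+1) = a*(r+1) := by rw [hg]; ring
      _ = b*x₀+1 := h2
      _ = (y₀+r+1)*x₀+1 := by rw [← hr]
  have hloss : y₀*a + x₀*b + 1 = a*b := by
    calc y₀*a + x₀*b + 1 = b*x₀ + a*y₀ + 1 := by ring
      _ = a*b := hxy
  have hres := KEY (a*b) q' (fun j => if (j:ℕ) < n1 then b else a) w' hR F G n2 (n1-1)
    hF hG i hFG hGi a b b g y₀ x₀ y₀ r hwF hwG (if_pos hi)
    (by omega) (by omega) (by omega) (by omega)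
    (mul_comm b a) (by rw [← hg]) (by rw [← hr]; exact mul_comm y₀ b) hbG hloss
  omega

private lemma case2 (a b n1 n2 x₀ y₀ q' : ℕ) (w' : Fin (n1+n2) → ℕ)
    (ha : 1 ≤ a) (hab : a < b) (hn1 : 2*a+1 ≤ n1) (hn2 : 2*b+1 ≤ n2)
    (hx₀ : x₀ < a) (hy₀ : y₀ < b) (hxy : b*x₀ + a*y₀ + 1 = a*b)
    (hR : ∀ U : Finset (Fin (n1+n2)),
      (a*b ≤ ∑ j ∈ U, (if (j:ℕ) < n1 then b else a)) ↔ q' ≤ ∑ j ∈ U, w' j)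
    (i : Fin (n1+n2)) (hi : ¬ (i:ℕ) < n1) : a ≤ w' i := by
  obtain ⟨g, hg⟩ : ∃ g, b = g + 1 := ⟨b-1, by omega⟩
  obtain ⟨r, hr⟩ : ∃ r, a = x₀ + r + 1 := ⟨a-x₀-1, by omega⟩
  set ti : ℕ := (i:ℕ) - n1 with hti
  have hti2 : (i:ℕ) = n1 + ti := by have := i.isLt; omega
  have hn1p : 0 < n1 := by omega
  have hm : 0 < n2 - 1 := by omega
  set F : ℕ → Fin (n1+n2) :=
    fun s => ⟨s % n1, by have := Nat.mod_lt s hn1p; omega⟩ with hF0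
  set qv : ℕ → ℕ :=
    fun s => if s % (n2-1) < ti then s % (n2-1) else s % (n2-1) + 1 with hqv
  have hqlt : ∀ s, qv s < n2 := by
    intro s; have h := Nat.mod_lt s hm; simp only [hqv]; split_ifs <;> omega
  set G : ℕ → Fin (n1+n2) := fun s => ⟨n1 + qv s, by have := hqlt s; omega⟩ with hG0
  have hF : ∀ s t : ℕ, F s = F t ↔ s % n1 = t % n1 := by
    intro s t; simp [hF0, Fin.ext_iff]
  have hmodeq : ∀ u v : ℕ, u % (n2-1) = v % (n2-1) → qv u = qv v := by
    intro u v h; simp only [hqv, h]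
  have hG : ∀ s t : ℕ, G s = G t ↔ s % (n2-1) = t % (n2-1) := by
    intro s t
    constructor
    · intro h
      have h2 : n1 + qv s = n1 + qv t := by simpa [hG0, Fin.ext_iff] using h
      have h3 : qv s = qv t := by omega
      simp only [hqv] at h3; split_ifs at h3 <;> omega
    · intro h; simp [hG0, Fin.ext_iff, hmodeq s t h]
  have hFG : ∀ s t : ℕ, F s ≠ G t := by
    intro s t h
    have h2 : s % n1 = n1 + qv t := by simpa [hF0, hG0, Fin.ext_iff] using h
    have := Nat.mod_lt s hn1p; omega
  have hGi : ∀ s, G s ≠ i := by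
    intro s h
    have h2 : n1 + qv s = (i:ℕ) := by simpa [hG0, Fin.ext_iff] using h
    rw [hti2] at h2
    have h3 : qv s = ti := by omega
    simp only [hqv] at h3; split_ifs at h3 <;> omega
  have hwF : ∀ s, (if ((F s):ℕ) < n1 then b else a) = b := by
    intro s; rw [if_pos]; simp [hF0]; exact Nat.mod_lt s hn1p
  have hwG : ∀ s, (if ((G s):ℕ) < n1 then b else a) = a := by
    intro s; rw [if_neg]; simp [hG0]
  have hbG : (r+1)*(g+1) = (x₀+r+1)*y₀ + 1 := by
    have h1 : b*(r+1) + b*x₀ = (a*y₀ + 1) + b*x₀ := by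
      rw [show (a*y₀+1)+b*x₀ = b*x₀+a*y₀+1 by ring, hxy, hr]; ring
    have h2 : b*(r+1) = a*y₀ + 1 := Nat.add_right_cancel h1
    calc (r+1)*(g+1) = b*(r+1) := by rw [hg]; ring
      _ = a*y₀+1 := h2
      _ = (x₀+r+1)*y₀+1 := by rw [← hr]
  have hloss : x₀*b + y₀*a + 1 = a*b := by
    calc x₀*b + y₀*a + 1 = b*x₀ + a*y₀ + 1 := by ring
      _ = a*b := hxy
  have hres := KEY (a*b) q' (fun j => if (j:ℕ) < n1 then b else a) w' hR F G n1 (n2-1)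
    hF hG i hFG hGi b a a g x₀ y₀ x₀ r hwF hwG (if_neg hi)
    (by omega) (by omega) (by omega) (by omega)
    (rfl) (by rw [← hg]; exact mul_comm b a) (by rw [← hr]; exact mul_comm x₀ a) hbG hloss
  omega

private lemma exists_xy' (a b : ℕ) (ha : 1 ≤ a) (hab : a < b) (hco : Nat.Coprime a b) :
    ∃ x y : ℕ, x < a ∧ y < b ∧ b * x + a * y + 1 = a * b := by
  haveI : NeZero a := ⟨by omega⟩
  set u : ZMod a := (b : ZMod a)⁻¹ with hu
  have h1 : (b : ZMod a) * u = 1 := ZMod.coe_mul_inv_eq_one b hco.symm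
  set x : ℕ := (-u).val with hx
  have hxa : x < a := ZMod.val_lt _
  have hdvd : a ∣ b * x + 1 := by
    rw [← ZMod.natCast_eq_zero_iff]
    push_cast
    rw [hx, ZMod.natCast_rightInverse (-u), mul_neg, h1]
    ring
  obtain ⟨c, hc⟩ := hdvd
  have hc1 : 1 ≤ c := by nlinarith
  have hcb : c ≤ b := by
    have h2 : a * c ≤ a * b := by nlinarith
    exact Nat.le_of_mul_le_mul_left h2 (by omega)
  obtain ⟨y, hy⟩ : ∃ y, c + y = b := ⟨b - c, by omega⟩
  refine ⟨x, y, hxa, by omega, ?_⟩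
  have hD : a * b = a * c + a * y := by rw [← hy]; ring
  rw [hD, ← hc]; ring


theorem stmt8' (a b n1 n2 : ℕ) (ha : 1 ≤ a) (hab : a < b) (hco : Nat.Coprime a b)
    (hn1 : 2 * a + 1 ≤ n1) (hn2 : 2 * b + 1 ≤ n2) :
    ∀ (q' : ℕ) (w' : Fin (n1 + n2) → ℕ),
      (∀ U : Finset (Fin (n1 + n2)),
          (a * b ≤ ∑ i ∈ U, (if (i : ℕ) < n1 then b else a)) ↔ q' ≤ ∑ i ∈ U, w' i) →
      a * b ≤ q' ∧
        ∀ i : Fin (n1 + n2), (if (i : ℕ) < n1 then b ≤ w' i else a ≤ w' i) := by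
  intro q' w' hR
  obtain ⟨x₀, y₀, hx₀, hy₀, hxy⟩ := exists_xy' a b ha hab hco
  have hpt : ∀ i : Fin (n1+n2), (if (i : ℕ) < n1 then b ≤ w' i else a ≤ w' i) := by
    intro i
    by_cases hi : (i:ℕ) < n1
    · rw [if_pos hi]; exact case1 a b n1 n2 x₀ y₀ q' w' ha hab hn1 hn2 hx₀ hy₀ hxy hR i hi
    · rw [if_neg hi]; exact case2 a b n1 n2 x₀ y₀ q' w' ha hab hn1 hn2 hx₀ hy₀ hxy hR i hi
  refine ⟨?_, hpt⟩
  have hn1p : 0 < n1 := by omega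
  have hn2p : 0 < n2 := by omega
  set F : ℕ → Fin (n1+n2) :=
    fun s => ⟨s % n1, by have := Nat.mod_lt s hn1p; omega⟩ with hF0
  set G : ℕ → Fin (n1+n2) :=
    fun s => ⟨n1 + s % n2, Nat.add_lt_add_left (Nat.mod_lt _ hn2p) n1⟩ with hG0
  have hF : ∀ s t : ℕ, F s = F t ↔ s % n1 = t % n1 := by
    intro s t; simp [hF0, Fin.ext_iff]
  have hG : ∀ s t : ℕ, G s = G t ↔ s % n2 = t % n2 := by
    intro s t; simp [hG0, Fin.ext_iff]
  set L : Finset (Fin (n1+n2)) :=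
    (range x₀).image (fun t => F (0 + t)) ∪ (range y₀).image (fun t => G (0 + t)) with hL
  have hdisj : Disjoint ((range x₀).image (fun t => F (0 + t)))
      ((range y₀).image (fun t => G (0 + t))) := by
    rw [Finset.disjoint_left]
    intro x hx hx'
    simp only [mem_image, mem_range] at hx hx'
    obtain ⟨t1, -, h1⟩ := hx; obtain ⟨t2, -, h2⟩ := hx'
    have h3 : F (0 + t1) = G (0 + t2) := h1.trans h2.symm
    have h4 : (0+t1) % n1 = n1 + (0+t2) % n2 := by simpa [hF0, hG0, Fin.ext_iff] using h3
    have := Nat.mod_lt (0+t1) hn1p; omega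
  have hwt : ∀ (f : Fin (n1+n2) → ℕ), ∑ j ∈ L, f j =
      (∑ t ∈ range x₀, f (F (0 + t))) + ∑ t ∈ range y₀, f (G (0 + t)) := by
    intro f
    rw [hL, Finset.sum_union hdisj,
      sum_blk F n1 hF f 0 x₀ (by omega), sum_blk G n2 hG f 0 y₀ (by omega)]
  have hwtL : ∑ j ∈ L, (if (j:ℕ) < n1 then b else a) = x₀ * b + y₀ * a := by
    rw [hwt]
    have e1 : ∀ t : ℕ, (if ((F t :ℕ)) < n1 then b else a) = b := by
      intro t; rw [if_pos]; simp [hF0]; exact Nat.mod_lt t hn1p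
    have e2 : ∀ t : ℕ, (if ((G t :ℕ)) < n1 then b else a) = a := by
      intro t; rw [if_neg]; simp [hG0]
    simp only [e1, e2, Finset.sum_const, card_range, smul_eq_mul, mul_one]
  have hnot : ¬ (a * b ≤ ∑ j ∈ L, (if (j:ℕ) < n1 then b else a)) := by
    rw [hwtL]
    intro h
    have : a*b ≤ x₀*b + y₀*a := h
    have h2 : x₀*b + y₀*a + 1 = a*b := by
      calc x₀*b + y₀*a + 1 = b*x₀ + a*y₀ + 1 := by ring
        _ = a*b := hxy
    omega
  rw [hR] at hnot
  have hlt : ∑ j ∈ L, w' j < q' := by omega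
  have hge : ∑ j ∈ L, (if (j:ℕ) < n1 then b else a) ≤ ∑ j ∈ L, w' j := by
    apply Finset.sum_le_sum
    intro j _
    have h := hpt j
    split_ifs at h ⊢ <;> assumption
  have h2 : x₀*b + y₀*a + 1 = a*b := by
    calc x₀*b + y₀*a + 1 = b*x₀ + a*y₀ + 1 := by ring
      _ = a*b := hxy
  rw [hwtL] at hge
  omega

theorem stmt8 (a b n1 n2 : ℕ) (ha : 1 ≤ a) (hab : a < b) (hco : Nat.Coprime a b)
    (hn1 : 2 * a + 1 ≤ n1) (hn2 : 2 * b + 1 ≤ n2) :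
    ∀ (q' : ℕ) (w' : Fin (n1 + n2) → ℕ),
      IsRep (fun U : Finset (Fin (n1 + n2)) =>
          a * b ≤ ∑ i ∈ U, (if (i : ℕ) < n1 then b else a)) q' w' →
      a * b ≤ q' ∧
        ∀ i : Fin (n1 + n2), (if (i : ℕ) < n1 then b ≤ w' i else a ≤ w' i) := by
  intro q' w' hR
  exact stmt8' a b n1 n2 ha hab hco hn1 hn2 q' w' (fun U => hR U)
end

section
/- Let t ≥ 1 and let a_1 > a_2 > … > a_t > 0 be integers with gcd(a_1, …, a_t) = 1. Let q = ∏_{j=1}^t a_j and let n_1, …, n_t be integers with n_i ≥ 1 + 2·∏_{j ≠ i} a_j for all i. Let χ be the weighted game on n_1 + … + n_t voters represented by [q; w], where w assigns weight a_i to each of the n_i voters of the i-th group. Then this representation is a minimum integer representation of χ: every integer representation [q'; w'] of χ satisfies q' ≥ q and w' v ≥ a_i for every voter v of the i-th group. -/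
lemma exists_low_subset {ι : Type*} [DecidableEq ι] (f : ι → ℕ) :
    ∀ X : Finset ι, ∀ k, k ≤ X.card →
      ∃ B, B ⊆ X ∧ B.card = k ∧ X.card * ∑ v ∈ B, f v ≤ k * ∑ v ∈ X, f v := by
  intro X
  induction X using Finset.strongInduction with
  | _ X ih =>
    intro k hk
    rcases eq_or_lt_of_le hk with heq | hlt
    · exact ⟨X, subset_rfl, heq.symm, by rw [heq]⟩
    · have hne : X.Nonempty := Finset.card_pos.mp (lt_of_le_of_lt (Nat.zero_le k) hlt)
      obtain ⟨u, hu, hmax⟩ := Finset.exists_max_image X f hne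
      have hsub : X.erase u ⊂ X := Finset.erase_ssubset hu
      have hcard : (X.erase u).card = X.card - 1 := Finset.card_erase_of_mem hu
      have hk' : k ≤ (X.erase u).card := by omega
      obtain ⟨B, hBsub, hBcard, hBsum⟩ := ih _ hsub k hk'
      refine ⟨B, hBsub.trans (Finset.erase_subset _ _), hBcard, ?_⟩
      have h1 : ∑ v ∈ B, f v ≤ k * f u := by
        calc ∑ v ∈ B, f v ≤ ∑ _v ∈ B, f u :=
              Finset.sum_le_sum (fun x hx => hmax x (Finset.mem_of_mem_erase (hBsub hx)))
        _ = k * f u := by rw [Finset.sum_const, hBcard, smul_eq_mul]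
      have h2 : ∑ v ∈ X, f v = f u + ∑ v ∈ X.erase u, f v := (Finset.add_sum_erase X f hu).symm
      rw [hcard] at hBsum
      have hx1 : 1 ≤ X.card := hne.card_pos
      have e : X.card * ∑ v ∈ B, f v = (X.card - 1) * ∑ v ∈ B, f v + ∑ v ∈ B, f v := by
        cases' Nat.exists_eq_add_of_le hx1 with n hn
        rw [hn, Nat.add_sub_cancel_left]; ring
      rw [e, h2, Nat.mul_add]
      omega

lemma exists_high_subset {ι : Type*} [DecidableEq ι] (f : ι → ℕ) :
    ∀ X : Finset ι, ∀ k, k ≤ X.card →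
      ∃ B, B ⊆ X ∧ B.card = k ∧ k * ∑ v ∈ X, f v ≤ X.card * ∑ v ∈ B, f v := by
  intro X
  induction X using Finset.strongInduction with
  | _ X ih =>
    intro k hk
    rcases eq_or_lt_of_le hk with heq | hlt
    · exact ⟨X, subset_rfl, heq.symm, by rw [heq]⟩
    · have hne : X.Nonempty := Finset.card_pos.mp (lt_of_le_of_lt (Nat.zero_le k) hlt)
      obtain ⟨u, hu, hmin⟩ := Finset.exists_min_image X f hne
      have hsub : X.erase u ⊂ X := Finset.erase_ssubset hu
      have hcard : (X.erase u).card = X.card - 1 := Finset.card_erase_of_mem hu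
      have hk' : k ≤ (X.erase u).card := by omega
      obtain ⟨B, hBsub, hBcard, hBsum⟩ := ih _ hsub k hk'
      refine ⟨B, hBsub.trans (Finset.erase_subset _ _), hBcard, ?_⟩
      have h1 : k * f u ≤ ∑ v ∈ B, f v := by
        calc k * f u = ∑ _v ∈ B, f u := by rw [Finset.sum_const, hBcard, smul_eq_mul]
        _ ≤ ∑ v ∈ B, f v :=
              Finset.sum_le_sum (fun x hx => hmin x (Finset.mem_of_mem_erase (hBsub hx)))
      have h2 : ∑ v ∈ X, f v = f u + ∑ v ∈ X.erase u, f v := (Finset.add_sum_erase X f hu).symm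
      rw [hcard] at hBsum
      have hx1 : 1 ≤ X.card := hne.card_pos
      have e : X.card * ∑ v ∈ B, f v = (X.card - 1) * ∑ v ∈ B, f v + ∑ v ∈ B, f v := by
        cases' Nat.exists_eq_add_of_le hx1 with n hn
        rw [hn, Nat.add_sub_cancel_left]; ring
      rw [e, h2, Nat.mul_add]
      omega


lemma claimS {ι : Type*} [DecidableEq ι] (a : ι → ℕ) :
    ∀ s : Finset ι, (∀ j ∈ s, 0 < a j) → ∀ n : ℕ, s.gcd a ∣ n → ∏ j ∈ s, a j ≤ n + s.gcd a →
      ∃ c : ι → ℕ, ∑ j ∈ s, c j * a j = n := by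
  intro s
  induction s using Finset.induction_on with
  | empty =>
    intro _ n hdvd hle
    simp only [Finset.gcd_empty] at hdvd
    simp only [Finset.prod_empty, Finset.gcd_empty] at hle
    omega
  | @insert x s' hx ih =>
    
    intro hpos n hdvd hle
    rcases Finset.eq_empty_or_nonempty s' with hs' | hs'
    · subst hs'
      simp only [Finset.gcd_insert, Finset.gcd_empty, gcd_zero_right] at hdvd
      -- gcd = normalize (a x) = a x in ℕ
      have hdvd' : a x ∣ n := by simpa using hdvd
      refine ⟨fun j => n / a x, ?_⟩
      simp [Nat.div_mul_cancel hdvd']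
    · have hbpos : 0 < a x := hpos x (Finset.mem_insert_self x s')
      have hpos' : ∀ j ∈ s', 0 < a j := fun j hj => hpos j (Finset.mem_insert_of_mem hj)
      set b := a x with hb
      set g' := s'.gcd a with hg'
      have hg'pos : 0 < g' := by
        rcases hs' with ⟨e, he⟩
        have : g' ∣ a e := Finset.gcd_dvd he
        have hae : 0 < a e := hpos' e he
        rcases Nat.eq_zero_or_pos g' with h0 | h; · simp [h0] at this; omega
        exact h
      set g := Nat.gcd b g' with hg
      have hgcd_ins : (insert x s').gcd a = g := by
        rw [Finset.gcd_insert]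
        rfl
      rw [hgcd_ins] at hdvd hle
      set Q' := ∏ j ∈ s', a j with hQ'
      have hQ'pos : 0 < Q' := Finset.prod_pos hpos'
      have hprod : ∏ j ∈ insert x s', a j = b * Q' := by rw [Finset.prod_insert hx]
      rw [hprod] at hle
      have hg'Q' : g' ≤ Q' := by
        rcases hs' with ⟨e, he⟩
        have h1 : g' ∣ a e := Finset.gcd_dvd he
        have h2 : a e ∣ Q' := Finset.dvd_prod_of_mem a he
        exact Nat.le_of_dvd hQ'pos (h1.trans h2)
      have hgb : g ≤ b := Nat.le_of_dvd hbpos (Nat.gcd_dvd_left _ _)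
      have hgg' : g ≤ g' := Nat.le_of_dvd hg'pos (Nat.gcd_dvd_right _ _)
      have hgpos : 0 < g := Nat.gcd_pos_of_pos_left _ hbpos
      -- Bezout coefficient
      set A : ℤ := Nat.gcdA b g' with hA
      set B : ℤ := Nat.gcdB b g' with hB
      have hBez : (g : ℤ) = b * A + g' * B := Nat.gcd_eq_gcd_ab b g'
      have hn : n = g * (n / g) := (Nat.mul_div_cancel' hdvd).symm
      set z : ℤ := A * (n / g : ℕ) with hz
      set cx : ℕ := (z % (g' : ℤ)).toNat with hcx
      have hg'z : (0:ℤ) < (g' : ℤ) := by exact_mod_cast hg'pos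
      have hcx_eq : (cx : ℤ) = z % (g' : ℤ) := by
        rw [hcx]
        exact Int.toNat_of_nonneg (Int.emod_nonneg z (by omega))
      have hcx_lt : cx < g' := by
        have := Int.emod_lt_of_pos z hg'z
        omega
      -- (g' : ℤ) ∣ cx * b - n
      have hdvd_int : (g' : ℤ) ∣ ((cx : ℤ) * b - n) := by
        have hmod : z % (g' : ℤ) = z - g' * (z / g') := Int.emod_def z g'
        refine ⟨(n / g : ℕ) * (-B) - (z / g') * b, ?_⟩
        rw [hcx_eq, hmod]
        have hnz : (n : ℤ) = (g : ℤ) * ((n / g : ℕ) : ℤ) := by exact_mod_cast hn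
        rw [hz]
        rw [hnz, hBez]
        ring
      have hf1 : cx * b + b ≤ g' * b := by
        have h := Nat.mul_le_mul_right b hcx_lt
        rwa [Nat.succ_mul] at h
      have hf2 : g' * b ≤ Q' * b := Nat.mul_le_mul_right b hg'Q'
      have hf5 : b * Q' ≤ n + g := hle
      have hf5' : Q' * b ≤ n + g := by rwa [mul_comm] at hf5
      have hcxb_le : cx * b ≤ n := by omega
      set R := n - cx * b with hR
      have hRn : cx * b + R = n := by omega
      have hg'R : g' ∣ R := by
        have hdvd2 : (g' : ℤ) ∣ ((n : ℤ) - (cx : ℤ) * b) := by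
          have h := dvd_neg.2 hdvd_int
          rwa [neg_sub] at h
        have hcast : ((R : ℕ) : ℤ) = (n : ℤ) - (cx : ℤ) * b := by
          push_cast [hR]
          omega
        have : (g' : ℤ) ∣ ((R : ℕ) : ℤ) := by rw [hcast]; exact hdvd2
        exact_mod_cast this
      have hf3 : Q' - g' ≤ (Q' - g') * b := Nat.le_mul_of_pos_right _ hbpos
      have hf4 : (Q' - g') * b = Q' * b - g' * b := Nat.sub_mul Q' g' b
      have hQ'R : Q' ≤ R + g' := by omega
      obtain ⟨c', hc'⟩ := ih hpos' R hg'R hQ'R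
      refine ⟨fun j => if j = x then cx else c' j, ?_⟩
      rw [Finset.sum_insert hx]
      simp only []
      rw [if_true]
      have : ∑ j ∈ s', (if j = x then cx else c' j) * a j = ∑ j ∈ s', c' j * a j := by
        apply Finset.sum_congr rfl
        intro j hj
        have : j ≠ x := by rintro rfl; exact hx hj
        simp [this]
      rw [this, hc']
      rw [← hb]
      omega



lemma Eplus {t : ℕ} (a : Fin t → ℕ) (hpos : ∀ i, 0 < a i)
    (hgcd : Finset.univ.gcd a = 1) (i : Fin t) :
    ∃ d : Fin t → ℕ, ∑ j, d j * a j = (∏ j, a j) - 1 ∧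
      ∏ j ∈ Finset.univ.erase i, a j ≤ a i * d i + 1 := by
  classical
  set q := ∏ j, a j with hqdef
  set P := ∏ j ∈ Finset.univ.erase i, a j with hPdef
  have hq : a i * P = q := Finset.mul_prod_erase _ _ (Finset.mem_univ i)
  have hPpos : 0 < P := Finset.prod_pos (fun j _ => hpos j)
  have hqpos : 0 < q := Finset.prod_pos (fun j _ => hpos j)
  have hins : insert i (Finset.univ.erase i) = Finset.univ :=
    Finset.insert_erase (Finset.mem_univ i)
  by_cases hai : a i = 1
  · refine ⟨fun j => if j = i then q - 1 else 0, ?_, ?_⟩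
    · rw [Finset.sum_eq_single i (fun b _ hb => by simp [hb]) (by simp)]
      simp [hai]
    · have hPq : P = q := by rw [hai, one_mul] at hq; exact hq
      simp only []
      rw [if_true, hai, one_mul]
      omega
  · have hai2 : 2 ≤ a i := by have := hpos i; omega
    have hne : (Finset.univ.erase i).Nonempty := by
      by_contra hemp
      rw [Finset.not_nonempty_iff_eq_empty] at hemp
      rw [← hins, hemp, Finset.gcd_insert, Finset.gcd_empty] at hgcd
      simp at hgcd
      omega
    set g := (Finset.univ.erase i).gcd a with hgdef
    obtain ⟨e, he⟩ := hne
    have hgdvd_e : g ∣ a e := Finset.gcd_dvd he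
    have hgpos : 0 < g := by
      rcases Nat.eq_zero_or_pos g with h0 | h
      · rw [h0] at hgdvd_e
        have := hpos e
        simp at hgdvd_e
        omega
      · exact h
    have hgP : g ∣ P := hgdvd_e.trans (Finset.dvd_prod_of_mem a he)
    have hgleP : g ≤ P := Nat.le_of_dvd hPpos hgP
    have hcop : Nat.gcd (a i) g = 1 := by
      have h2 : Finset.univ.gcd a = GCDMonoid.gcd (a i) g := by
        rw [← hins, Finset.gcd_insert]
      rw [h2] at hgcd
      exact hgcd
    have hcop' : Nat.gcd g (a i) = 1 := by rw [Nat.gcd_comm]; exact hcop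
    -- find u with a i ∣ g * u + 1
    set A : ℤ := Nat.gcdA g (a i) with hA
    set B : ℤ := Nat.gcdB g (a i) with hB
    have hBez : (1 : ℤ) = g * A + (a i) * B := by
      have := Nat.gcd_eq_gcd_ab g (a i)
      rw [hcop'] at this
      exact_mod_cast this
    have haiz : (0:ℤ) < (a i : ℤ) := by exact_mod_cast hpos i
    set u : ℕ := ((-A) % (a i : ℤ)).toNat with hu
    have hu_eq : (u : ℤ) = (-A) % (a i : ℤ) :=
      Int.toNat_of_nonneg (Int.emod_nonneg _ (by omega))
    have hdvd_u : a i ∣ g * u + 1 := by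
      have hint : ((a i : ℕ) : ℤ) ∣ ((g * u + 1 : ℕ) : ℤ) := by
        push_cast
        rw [hu_eq, Int.emod_def]
        refine ⟨B - g * ((-A) / (a i : ℤ)), ?_⟩
        have : (1:ℤ) - g * A = (a i) * B := by linarith [hBez]
        ring_nf
        nlinarith [hBez]
      exact_mod_cast hint
    set N : ℕ := P / g - 1 with hN
    have hPg1 : 1 ≤ P / g := Nat.div_pos hgleP hgpos
    have hgPg : g * (P / g) = P := Nat.mul_div_cancel' hgP
    set off : ℕ := (u + a i - N % a i) % a i with hoff
    set mm : ℕ := N + off with hmm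
    have hoff_lt : off < a i := Nat.mod_lt _ (hpos i)
    -- mm ≡ u [MOD a i]
    have hmod : mm ≡ u [MOD a i] := by
      have h1 : (u + a i - N % a i) % a i ≡ u + a i - N % a i [MOD a i] := Nat.mod_modEq _ _
      have h2 : mm ≡ N + (u + a i - N % a i) [MOD a i] := Nat.ModEq.add_left N h1
      have hda : a i * (N / a i) + N % a i = N := Nat.div_add_mod N (a i)
      have hr_lt : N % a i < a i := Nat.mod_lt _ (hpos i)
      have h3 : N + (u + a i - N % a i) = a i * (N / a i) + a i + u := by omega
      have h4 : a i * (N / a i) + a i + u ≡ u [MOD a i] := by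
        have : a i * (N / a i) + a i ≡ 0 [MOD a i] :=
          (Nat.modEq_zero_iff_dvd).2 ⟨N / a i + 1, by ring⟩
        simpa using this.add_right u
      calc mm ≡ N + (u + a i - N % a i) [MOD a i] := h2
        _ = a i * (N / a i) + a i + u := h3
        _ ≡ u [MOD a i] := h4
    have hdvd_m : a i ∣ g * mm + 1 := by
      have h5 : g * mm + 1 ≡ g * u + 1 [MOD a i] := (hmod.mul_left g).add_right 1
      have h6 : g * u + 1 ≡ 0 [MOD a i] := (Nat.modEq_zero_iff_dvd).2 hdvd_u
      exact (Nat.modEq_zero_iff_dvd).1 (h5.trans h6)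
    set R : ℕ := g * mm with hR
    have hgR : g ∣ R := Dvd.intro _ rfl
    have hPR : P ≤ R + g := by
      have h1 : N + 1 ≤ mm + 1 := by omega
      have h2 : g * (N + 1) ≤ g * (mm + 1) := Nat.mul_le_mul_left g h1
      have h3 : g * (N + 1) = P := by
        have : N + 1 = P / g := by omega
        rw [this, hgPg]
      have h4 : g * (mm + 1) = R + g := by rw [hR]; ring
      omega
    obtain ⟨c', hc'⟩ := claimS a (Finset.univ.erase i)
      (fun j _ => hpos j) R hgR (by rw [← hgdef, ← hPdef]; exact hPR)
    -- bounds: R ≤ P - 2g + g * a i, and q ≥ R + P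
    obtain ⟨k', hk'⟩ := Nat.exists_eq_add_of_le hPg1  -- P/g = 1 + k'
    have hgk : g + g * k' = P := by
      rw [← hgPg, hk']; ring
    have hRub : R + 2 * g ≤ P + g * a i := by
      have h1 : mm + 1 ≤ N + a i := by omega
      have h2 : g * (mm + 1) ≤ g * (N + a i) := Nat.mul_le_mul_left g h1
      have h3 : g * N = g * k' := by
        have : N = k' := by omega
        rw [this]
      have h4 : g * (N + a i) = g * N + g * a i := by ring
      have h5 : g * (mm + 1) = R + g := by rw [hR]; ring
      omega
    obtain ⟨k2, hk2⟩ := Nat.exists_eq_add_of_le hai2  -- a i = 2 + k2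
    have hmulk2 : k2 * g ≤ k2 * P := Nat.mul_le_mul_left k2 hgleP
    have hqPk : q = k2 * P + 2 * P := by rw [← hq, hk2]; ring
    have hgai : g * a i = g * k2 + 2 * g := by rw [hk2]; ring
    have hgk2 : g * k2 = k2 * g := by ring
    have hqRP : R + P ≤ q := by omega
    have hRq : R + 1 ≤ q := by omega
    set X : ℕ := q - 1 - R with hX
    have hdvdX : a i ∣ X := by
      have hXeq : X = q - (R + 1) := by omega
      rw [hXeq]
      exact Nat.dvd_sub (Dvd.intro P hq) hdvd_m
    have hXmul : a i * (X / a i) = X := Nat.mul_div_cancel' hdvdX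
    refine ⟨fun j => if j = i then X / a i else c' j, ?_, ?_⟩
    · rw [← hins, Finset.sum_insert (Finset.notMem_erase i _)]
      simp only []
      rw [if_true]
      have hrest : ∑ j ∈ Finset.univ.erase i, (if j = i then X / a i else c' j) * a j
          = ∑ j ∈ Finset.univ.erase i, c' j * a j := by
        apply Finset.sum_congr rfl
        intro j hj
        rw [if_neg (Finset.ne_of_mem_erase hj)]
      rw [hrest, hc']
      have : X / a i * a i = X := by rw [mul_comm]; exact hXmul
      omega
    · simp only []
      rw [if_true]
      omega





set_option maxHeartbeats 2000000 in
theorem stmt10 (t : ℕ) (ht : 1 ≤ t) (a : Fin t → ℕ) (hpos : ∀ i, 0 < a i)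
    (hdec : ∀ i j : Fin t, i < j → a j < a i)
    (hgcd : Finset.univ.gcd a = 1)
    (m : Fin t → ℕ) (hm : ∀ i : Fin t, 1 + 2 * ∏ j ∈ Finset.univ.erase i, a j ≤ m i) :
    ∀ (q' : ℕ) (w' : ((i : Fin t) × Fin (m i)) → ℕ),
      (∀ U : Finset ((i : Fin t) × Fin (m i)),
        ((∏ j, a j) ≤ ∑ v ∈ U, a v.1) ↔ q' ≤ ∑ v ∈ U, w' v) →
      (∏ j, a j) ≤ q' ∧ ∀ v : (i : Fin t) × Fin (m i), a v.1 ≤ w' v := by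
  classical
  intro q' w' H
  set q := ∏ j, a j with hqdef
  have hqpos : 0 < q := Finset.prod_pos (fun j _ => hpos j)
  set P : Fin t → ℕ := fun j => ∏ l ∈ Finset.univ.erase j, a l with hPdef
  have hqP : ∀ j, a j * P j = q := fun j => Finset.mul_prod_erase _ _ (Finset.mem_univ j)
  have hPpos : ∀ j, 0 < P j := fun j => Finset.prod_pos (fun l _ => hpos l)
  have hmP : ∀ j, 2 * P j + 1 ≤ m j := fun j => by
    show 2 * (∏ l ∈ Finset.univ.erase j, a l) + 1 ≤ m j
    have := hm j; omega
  set Gset : Fin t → Finset ((i : Fin t) × Fin (m i)) :=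
    fun j => Finset.univ.image (fun k : Fin (m j) => (⟨j, k⟩ : (i : Fin t) × Fin (m i)))
    with hGdef
  have hGmem : ∀ j (v : (i : Fin t) × Fin (m i)), v ∈ Gset j ↔ v.1 = j := by
    intro j v
    constructor
    · intro hv
      obtain ⟨k, _, hk⟩ := Finset.mem_image.mp hv
      rw [← hk]
    · intro hv
      obtain ⟨j', k⟩ := v
      cases hv
      exact Finset.mem_image.mpr ⟨k, Finset.mem_univ k, rfl⟩
  have hGcard : ∀ j, (Gset j).card = m j := by
    intro j
    rw [hGdef]
    rw [Finset.card_image_of_injective _ sigma_mk_injective, Finset.card_univ, Fintype.card_fin]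
  have hAsum : ∀ (j : Fin t) (B : Finset ((i : Fin t) × Fin (m i))), B ⊆ Gset j →
      ∑ u ∈ B, a u.1 = B.card * a j := by
    intro j B hB
    rw [Finset.sum_congr rfl (fun u hu => by rw [(hGmem j u).1 (hB hu)])]
    rw [Finset.sum_const, smul_eq_mul]
  have key : ∀ v : (i : Fin t) × Fin (m i), (q ≤ q' ∧ (a v.1 : ℕ) ≤ w' v) := by
    intro v
    set i := v.1 with hidef
    obtain ⟨d, hdsum, hdkey⟩ := Eplus a hpos hgcd i
    rw [← hqdef] at hdsum
    have hdkey' : P i ≤ a i * d i + 1 := hdkey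
    set X : Fin t → Finset ((i : Fin t) × Fin (m i)) :=
      fun j => if j = i then (Gset i).erase v else Gset j with hXdef
    have hXi : X i = (Gset i).erase v := by simp [hXdef]
    have hXne : ∀ j, j ≠ i → X j = Gset j := by
      intro j hj; simp [hXdef, hj]
    have hXsub : ∀ j, X j ⊆ Gset j := by
      intro j
      by_cases hj : j = i
      · subst hj; rw [hXi]; exact Finset.erase_subset _ _
      · rw [hXne j hj]
    have hLeq : ∀ j, (X j).card = if j = i then m i - 1 else m j := by
      intro j
      by_cases hj : j = i
      · rw [hj, hXi, if_pos rfl, Finset.card_erase_of_mem ((hGmem i v).2 rfl), hGcard]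
      · rw [hXne j hj, if_neg hj, hGcard]
    have hPL : ∀ j, P j ≤ (X j).card := by
      intro j
      rw [hLeq]
      by_cases hj : j = i
      · rw [if_pos hj, hj]; have := hmP i; omega
      · rw [if_neg hj]; have := hmP j; omega
    have hLpos : ∀ j, 0 < (X j).card := fun j => lt_of_lt_of_le (hPpos j) (hPL j)
    have hdlt : ∀ j, d j < P j := by
      intro j
      have h1 : d j * a j ≤ q - 1 := by
        rw [← hdsum]
        exact Finset.single_le_sum (f := fun l => d l * a l) (fun l _ => Nat.zero_le _)
          (Finset.mem_univ j)
      have h2 : d j * a j < P j * a j := by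
        calc d j * a j ≤ q - 1 := h1
          _ < q := by omega
          _ = P j * a j := by rw [← hqP j]; ring
      exact Nat.lt_of_mul_lt_mul_right h2
    have hdL : ∀ j, d j ≤ (X j).card := fun j => le_trans (Nat.le_of_lt (hdlt j)) (hPL j)
    set T : Fin t → ℕ := fun j => ∑ u ∈ X j, w' u with hTdef
    have hTeq : ∀ j, T j = ∑ u ∈ X j, w' u := fun j => rfl
    set τ : Fin t → ℚ := fun j => (T j : ℚ) / ((X j).card : ℚ) with hτdef
    have hτeq : ∀ j, τ j = (T j : ℚ) / ((X j).card : ℚ) := fun j => rfl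
    have hτ0 : ∀ j, 0 ≤ τ j := fun j => by
      rw [hτeq]; positivity
    have hLQpos : ∀ j, (0:ℚ) < ((X j).card : ℚ) := fun j => by exact_mod_cast hLpos j
    -- (a) winning pure-j inequalities
    have ha : ∀ j, (q' : ℚ) ≤ (P j : ℚ) * τ j := by
      intro j
      obtain ⟨B, hBsub, hBcard, hBsum⟩ := exists_low_subset w' (X j) (P j) (hPL j)
      have hwin : q ≤ ∑ u ∈ B, a u.1 := by
        rw [hAsum j B (hBsub.trans (hXsub j)), hBcard, mul_comm, hqP j]
      have hq'B : q' ≤ ∑ u ∈ B, w' u := (H B).1 hwin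
      have h2 : ((∑ u ∈ B, w' u : ℕ) : ℚ) ≤ (P j : ℚ) * τ j := by
        rw [hτeq, mul_div_assoc']
        rw [le_div_iff₀ (hLQpos j)]
        have hN : ((X j).card : ℚ) * ((∑ u ∈ B, w' u : ℕ) : ℚ) ≤ (P j : ℚ) * (T j : ℚ) := by
          exact_mod_cast hBsum
        calc ((∑ u ∈ B, w' u : ℕ) : ℚ) * ((X j).card : ℚ)
            = ((X j).card : ℚ) * ((∑ u ∈ B, w' u : ℕ) : ℚ) := by ring
          _ ≤ (P j : ℚ) * (T j : ℚ) := hN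
      calc (q' : ℚ) ≤ ((∑ u ∈ B, w' u : ℕ) : ℚ) := by exact_mod_cast hq'B
        _ ≤ (P j : ℚ) * τ j := h2
    -- (b) winning coalition containing v
    have hb : (q' : ℚ) ≤ (w' v : ℚ) + ((P i : ℚ) - 1) * τ i := by
      obtain ⟨B, hBsub, hBcard, hBsum⟩ := exists_low_subset w' (X i) (P i - 1)
        (le_trans (by omega) (hPL i))
      have hvB : v ∉ B := by
        intro hvB
        have hmem : v ∈ X i := hBsub hvB
        rw [hXi] at hmem
        exact Finset.notMem_erase v _ hmem
      have hwin : q ≤ ∑ u ∈ insert v B, a u.1 := by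
        rw [Finset.sum_insert hvB, hAsum i B (hBsub.trans (hXsub i)), hBcard]
        have h1 : a v.1 = a i := rfl
        obtain ⟨p, hp⟩ : ∃ p, P i = p + 1 := ⟨P i - 1, by have := hPpos i; omega⟩
        rw [h1]
        have h2 := hqP i
        rw [hp] at h2 ⊢
        simp only [Nat.add_sub_cancel]
        nlinarith
      have hq'B : q' ≤ w' v + ∑ u ∈ B, w' u := by
        have := (H (insert v B)).1 hwin
        rwa [Finset.sum_insert hvB] at this
      have hcast : ((P i - 1 : ℕ) : ℚ) = (P i : ℚ) - 1 := by
        have h3 : 1 ≤ P i := hPpos i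
        push_cast [Nat.cast_sub h3]
        ring
      have h2 : ((∑ u ∈ B, w' u : ℕ) : ℚ) ≤ ((P i : ℚ) - 1) * τ i := by
        rw [hτeq, mul_div_assoc']
        rw [le_div_iff₀ (hLQpos i)]
        have hN : ((X i).card : ℚ) * ((∑ u ∈ B, w' u : ℕ) : ℚ)
            ≤ ((P i : ℚ) - 1) * (T i : ℚ) := by
          rw [← hcast]
          exact_mod_cast hBsum
        calc ((∑ u ∈ B, w' u : ℕ) : ℚ) * ((X i).card : ℚ)
            = ((X i).card : ℚ) * ((∑ u ∈ B, w' u : ℕ) : ℚ) := by ring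
          _ ≤ ((P i : ℚ) - 1) * (T i : ℚ) := hN
      have h4 : (q' : ℚ) ≤ (w' v : ℚ) + ((∑ u ∈ B, w' u : ℕ) : ℚ) := by exact_mod_cast hq'B
      linarith
    -- (c) losing coalition
    have hc : (∑ j, (d j : ℚ) * τ j) + 1 ≤ (q' : ℚ) := by
      have hex : ∀ j : Fin t, ∃ B, B ⊆ X j ∧ B.card = d j ∧
          d j * ∑ u ∈ X j, w' u ≤ (X j).card * ∑ u ∈ B, w' u :=
        fun j => exists_high_subset w' (X j) (d j) (hdL j)
      choose B hBsub hBcard hBsum using hex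
      have hdisj : ∀ j1 ∈ (Finset.univ : Finset (Fin t)), ∀ j2 ∈ Finset.univ, j1 ≠ j2 →
          Disjoint (B j1) (B j2) := by
        intro j1 _ j2 _ hne
        rw [Finset.disjoint_left]
        intro u hu1 hu2
        have e1 : u.1 = j1 := (hGmem j1 u).1 ((hXsub j1) (hBsub j1 hu1))
        have e2 : u.1 = j2 := (hGmem j2 u).1 ((hXsub j2) (hBsub j2 hu2))
        exact hne (e1 ▸ e2)
      have hAU : ∑ u ∈ Finset.univ.biUnion B, a u.1 = q - 1 := by
        rw [Finset.sum_biUnion hdisj, ← hdsum]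
        apply Finset.sum_congr rfl
        intro j _
        rw [hAsum j (B j) ((hBsub j).trans (hXsub j)), hBcard j]
      have hlose : ¬ (q ≤ ∑ u ∈ Finset.univ.biUnion B, a u.1) := by rw [hAU]; omega
      have hq'U : (∑ u ∈ Finset.univ.biUnion B, w' u) + 1 ≤ q' := by
        by_contra hcon
        push_neg at hcon
        exact hlose ((H _).2 (by omega))
      have hWU : ∑ u ∈ Finset.univ.biUnion B, w' u = ∑ j, ∑ u ∈ B j, w' u :=
        Finset.sum_biUnion hdisj
      have hper : ∀ j, (d j : ℚ) * τ j ≤ ((∑ u ∈ B j, w' u : ℕ) : ℚ) := by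
        intro j
        rw [hτeq, mul_div_assoc']
        rw [div_le_iff₀ (hLQpos j)]
        have hN : ((d j : ℕ) : ℚ) * (T j : ℚ) ≤ ((∑ u ∈ B j, w' u : ℕ) : ℚ) * ((X j).card : ℚ) := by
          have := hBsum j
          have hcast : (d j * T j : ℕ) ≤ ((X j).card * ∑ u ∈ B j, w' u : ℕ) := this
          calc ((d j : ℕ) : ℚ) * (T j : ℚ) = ((d j * T j : ℕ) : ℚ) := by push_cast; ring
            _ ≤ (((X j).card * ∑ u ∈ B j, w' u : ℕ) : ℚ) := by exact_mod_cast hcast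
            _ = ((∑ u ∈ B j, w' u : ℕ) : ℚ) * ((X j).card : ℚ) := by push_cast; ring
        exact hN
      have hsum2 : ∑ j, (d j : ℚ) * τ j ≤ ∑ j, ((∑ u ∈ B j, w' u : ℕ) : ℚ) :=
        Finset.sum_le_sum (fun j _ => hper j)
      have hfin : (∑ j, ((∑ u ∈ B j, w' u : ℕ) : ℚ)) + 1 ≤ (q' : ℚ) := by
        have : ((∑ u ∈ Finset.univ.biUnion B, w' u : ℕ) : ℚ) + 1 ≤ (q' : ℚ) := by
          exact_mod_cast hq'U
        rw [hWU] at this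
        push_cast at this ⊢
        linarith
      linarith
    -- pure algebra over ℚ
    have hqPQ : ∀ j, (a j : ℚ) * (P j : ℚ) = (q : ℚ) := by
      intro j; exact_mod_cast hqP j
    have hdsumQ : ∑ j, (d j : ℚ) * (a j : ℚ) = (q : ℚ) - 1 := by
      have hcast : ((∑ j, d j * a j : ℕ) : ℚ) = ((q - 1 : ℕ) : ℚ) := by exact_mod_cast hdsum
      rw [Nat.cast_sub (by omega : 1 ≤ q)] at hcast
      push_cast at hcast
      convert hcast using 1
    have hAineq : ∀ j, (q' : ℚ) * ((d j : ℚ) * (a j : ℚ)) ≤ (q : ℚ) * ((d j : ℚ) * τ j) := by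
      intro j
      have h1 := ha j
      have h2 : (0:ℚ) ≤ (d j : ℚ) * (a j : ℚ) := by positivity
      calc (q' : ℚ) * ((d j : ℚ) * (a j : ℚ)) ≤ ((P j : ℚ) * τ j) * ((d j : ℚ) * (a j : ℚ)) :=
            mul_le_mul_of_nonneg_right h1 h2
        _ = ((a j : ℚ) * (P j : ℚ)) * ((d j : ℚ) * τ j) := by ring
        _ = (q : ℚ) * ((d j : ℚ) * τ j) := by rw [hqPQ j]
    have hSum1 : (q' : ℚ) * ((q : ℚ) - 1) ≤ (q : ℚ) * ∑ j, (d j : ℚ) * τ j := by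
      calc (q' : ℚ) * ((q : ℚ) - 1) = (q' : ℚ) * ∑ j, (d j : ℚ) * (a j : ℚ) := by rw [hdsumQ]
        _ = ∑ j, (q' : ℚ) * ((d j : ℚ) * (a j : ℚ)) := Finset.mul_sum _ _ _
        _ ≤ ∑ j, (q : ℚ) * ((d j : ℚ) * τ j) := Finset.sum_le_sum (fun j _ => hAineq j)
        _ = (q : ℚ) * ∑ j, (d j : ℚ) * τ j := (Finset.mul_sum _ _ _).symm
    have hq0 : (0:ℚ) < (q:ℚ) := by exact_mod_cast hqpos
    have hqq' : (q : ℚ) ≤ (q' : ℚ) := by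
      have h1 : (q : ℚ) * (∑ j, (d j : ℚ) * τ j) ≤ (q : ℚ) * ((q' : ℚ) - 1) :=
        mul_le_mul_of_nonneg_left (by linarith [hc]) (le_of_lt hq0)
      nlinarith [hSum1, h1]
    refine ⟨by exact_mod_cast hqq', ?_⟩
    have hsplitτ : (∑ j, (d j : ℚ) * τ j)
        = (d i : ℚ) * τ i + ∑ j ∈ Finset.univ.erase i, (d j : ℚ) * τ j :=
      (Finset.add_sum_erase _ _ (Finset.mem_univ i)).symm
    have hsplita : (d i : ℚ) * (a i : ℚ) + ∑ j ∈ Finset.univ.erase i, (d j : ℚ) * (a j : ℚ)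
        = (q : ℚ) - 1 := by
      have h0 : (d i : ℚ) * (a i : ℚ) + ∑ j ∈ Finset.univ.erase i, (d j : ℚ) * (a j : ℚ)
          = ∑ j, (d j : ℚ) * (a j : ℚ) := Finset.add_sum_erase _ (fun j => (d j : ℚ) * (a j : ℚ)) (Finset.mem_univ i)
      rw [hdsumQ] at h0
      exact h0
    have hSum2 : (q' : ℚ) * (((q : ℚ) - 1) - (d i : ℚ) * (a i : ℚ))
        ≤ (q : ℚ) * ∑ j ∈ Finset.univ.erase i, (d j : ℚ) * τ j := by
      calc (q' : ℚ) * (((q : ℚ) - 1) - (d i : ℚ) * (a i : ℚ))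
          = (q' : ℚ) * ∑ j ∈ Finset.univ.erase i, (d j : ℚ) * (a j : ℚ) := by
            rw [show ((q : ℚ) - 1) - (d i : ℚ) * (a i : ℚ)
              = ∑ j ∈ Finset.univ.erase i, (d j : ℚ) * (a j : ℚ) from by linarith [hsplita]]
        _ = ∑ j ∈ Finset.univ.erase i, (q' : ℚ) * ((d j : ℚ) * (a j : ℚ)) :=
            Finset.mul_sum _ _ _
        _ ≤ ∑ j ∈ Finset.univ.erase i, (q : ℚ) * ((d j : ℚ) * τ j) :=
            Finset.sum_le_sum (fun j _ => hAineq j)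
        _ = (q : ℚ) * ∑ j ∈ Finset.univ.erase i, (d j : ℚ) * τ j := (Finset.mul_sum _ _ _).symm
    have hdkeyQ : (P i : ℚ) ≤ (a i : ℚ) * (d i : ℚ) + 1 := by exact_mod_cast hdkey'
    by_cases hdi : d i = 0
    · have hPi1 : P i = 1 := by
        have h5 := hdkey'
        rw [hdi] at h5
        have := hPpos i
        omega
      have haiq : a i = q := by have := hqP i; rw [hPi1] at this; omega
      have hwv : (q' : ℚ) ≤ (w' v : ℚ) := by
        have h6 := hb
        rw [hPi1] at h6
        have h7 : ((1:ℕ):ℚ) - 1 = 0 := by norm_num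
        rw [h7, zero_mul, add_zero] at h6
        exact h6
      have h7 : (a i : ℚ) ≤ (w' v : ℚ) := by
        rw [haiq]
        linarith [hqq']
      exact_mod_cast h7
    · have hdi1 : (1:ℚ) ≤ (d i : ℚ) := by
        have h8 : 1 ≤ d i := Nat.one_le_iff_ne_zero.mpr hdi
        exact_mod_cast h8
      have hF1 : (q : ℚ) * ((d i : ℚ) * τ i)
          ≤ (q : ℚ) * ((q' : ℚ) - 1) - (q' : ℚ) * (((q : ℚ) - 1) - (d i : ℚ) * (a i : ℚ)) := by
        have h1 : (q : ℚ) * ((d i : ℚ) * τ i + ∑ j ∈ Finset.univ.erase i, (d j : ℚ) * τ j)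
            ≤ (q : ℚ) * ((q' : ℚ) - 1) := by
          rw [← hsplitτ]
          exact mul_le_mul_of_nonneg_left (by linarith [hc]) (le_of_lt hq0)
        have h2 := hSum2
        have h3 : (q : ℚ) * ((d i : ℚ) * τ i + ∑ j ∈ Finset.univ.erase i, (d j : ℚ) * τ j)
            = (q : ℚ) * ((d i : ℚ) * τ i)
              + (q : ℚ) * ∑ j ∈ Finset.univ.erase i, (d j : ℚ) * τ j := by ring
        linarith
      have hAi1 : (1:ℚ) ≤ (a i : ℚ) := by exact_mod_cast hpos i
      have hPiQ1 : (1:ℚ) ≤ (P i : ℚ) := by exact_mod_cast hPpos i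
      have hτi := hτ0 i
      have hkey2 : (0:ℚ) ≤ (d i : ℚ) * (a i : ℚ) + 1 - (P i : ℚ) := by linarith [hdkeyQ]
      -- multiply hb by q * d i ≥ 0
      have hs1 : (q' : ℚ) * ((q : ℚ) * (d i : ℚ))
          ≤ ((w' v : ℚ) + ((P i : ℚ) - 1) * τ i) * ((q : ℚ) * (d i : ℚ)) :=
        mul_le_mul_of_nonneg_right hb (by positivity)
      -- multiply hF1 by (P i - 1) ≥ 0
      have hs2 : ((P i : ℚ) - 1) * ((q : ℚ) * ((d i : ℚ) * τ i))
          ≤ ((P i : ℚ) - 1) * ((q : ℚ) * ((q' : ℚ) - 1)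
              - (q' : ℚ) * (((q : ℚ) - 1) - (d i : ℚ) * (a i : ℚ))) :=
        mul_le_mul_of_nonneg_left hF1 (by linarith)
      -- multiply q ≤ q' by (d i * a i + 1 - P i) ≥ 0
      have hs3 : (q : ℚ) * ((d i : ℚ) * (a i : ℚ) + 1 - (P i : ℚ))
          ≤ (q' : ℚ) * ((d i : ℚ) * (a i : ℚ) + 1 - (P i : ℚ)) :=
        mul_le_mul_of_nonneg_right hqq' hkey2
      -- substitution q = a i * P i  (as products)
      have hs4 : (q' : ℚ) * ((q : ℚ) * (d i : ℚ))
          = (q' : ℚ) * (((a i : ℚ) * (P i : ℚ)) * (d i : ℚ)) := by rw [hqPQ i]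
      have hfin : (q : ℚ) * ((d i : ℚ) * (a i : ℚ)) ≤ (q : ℚ) * ((d i : ℚ) * (w' v : ℚ)) := by
        nlinarith [hs1, hs2, hs3, hs4]
      have h9 : (d i : ℚ) * (a i : ℚ) ≤ (d i : ℚ) * (w' v : ℚ) :=
        le_of_mul_le_mul_left (by linarith [hfin]) hq0
      have h10 : (a i : ℚ) ≤ (w' v : ℚ) :=
        le_of_mul_le_mul_left (by linarith [h9]) (by linarith : (0:ℚ) < (d i : ℚ))
      exact_mod_cast h10
  have hm0 : 0 < m ⟨0, ht⟩ := by
    have h1 := hm ⟨0, ht⟩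
    omega
  exact ⟨(key ⟨⟨0, ht⟩, ⟨0, hm0⟩⟩).1, fun v => (key v).2⟩
end
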